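/- arXiv:1907.11600 — 8 statements merged into one kernel-verified Lean document; each statement's English description precedes it below -/
import Mathlib

section
/- For every integer k and every multigraph G, there exists a partition (A,B) of the vertex set of G with A nonempty such that the number of edges between A and B is at most 2k, and the induced subgraph G[A] is k-edge-connected or has only one vertex. -/
/-- Adjacency in a multigraph given by an endpoint map, using only edges in `F`. -/
def MGAdj {V E : Type} (ends : E → Sym2 V) (F : Set E) (u v : V) : Prop :=
  ∃ e ∈ F, ends e = s(u, v)

/-- The vertex set `A` is connected using only edges in `F` (with all intermediate
vertices in `A`). -/
def MGConnOn {V E : Type} (ends : E → Sym2 V) (A : Set V) (F : Set E) : Prop :=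
  ∀ u ∈ A, ∀ v ∈ A,
    Relation.ReflTransGen (fun x y => x ∈ A ∧ y ∈ A ∧ MGAdj ends F x y) u v

/-- The induced multigraph on `A` is `k`-edge-connected: after deleting any set of
fewer than `k` edges, the induced graph on `A` remains connected. -/
def MGEdgeConnOn {V E : Type} (ends : E → Sym2 V) (A : Set V) (k : ℕ) : Prop :=
  ∀ D : Set E, Nat.card D < k →
    MGConnOn ends A {e | (∀ x ∈ ends e, x ∈ A) ∧ e ∉ D}

/-- The crossing-edge set of a cut `(A, Aᶜ)`. -/
def MGCutset {V E : Type} (ends : E → Sym2 V) (A : Set V) : Set E :=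
  {e | (∃ x ∈ ends e, x ∈ A) ∧ (∃ y ∈ ends e, y ∉ A)}

lemma mg_key {V E : Type} [Fintype V] [Fintype E] (ends : E → Sym2 V) (k : ℕ) :
    ∀ n : ℕ, ∀ A : Set V, Nat.card A ≤ n → A.Nonempty →
      (MGCutset ends A).ncard ≤ 2 * k →
      ∃ B : Set V, B.Nonempty ∧ (MGCutset ends B).ncard ≤ 2 * k ∧
        (MGEdgeConnOn ends B k ∨ Nat.card B = 1) := by
  intro n
  induction n with
  | zero =>
    intro A hA hne _
    exfalso
    have : Nonempty A := hne.to_subtype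
    have := Nat.card_pos (α := A)
    omega
  | succ n ih =>
    intro A hcard hne hcut
    by_cases h1 : Nat.card A = 1
    · exact ⟨A, hne, hcut, Or.inr h1⟩
    by_cases hconn : MGEdgeConnOn ends A k
    · exact ⟨A, hne, hcut, Or.inl hconn⟩
    unfold MGEdgeConnOn MGConnOn at hconn
    push_neg at hconn
    obtain ⟨D, hD, u, hu, v, hv, hnr⟩ := hconn
    set F : Set E := {e | (∀ x ∈ ends e, x ∈ A) ∧ e ∉ D} with hF
    set R : V → V → Prop := fun x y => x ∈ A ∧ y ∈ A ∧ MGAdj ends F x y with hR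
    set A₁ : Set V := {x | x ∈ A ∧ Relation.ReflTransGen R u x} with hA₁
    set A₂ : Set V := A \ A₁ with hA₂
    have hu1 : u ∈ A₁ := ⟨hu, Relation.ReflTransGen.refl⟩
    have hv2 : v ∈ A₂ := ⟨hv, fun h => hnr h.2⟩
    have hsub1 : A₁ ⊆ A := fun x hx => hx.1
    have hsub2 : A₂ ⊆ A := fun x hx => hx.1
    -- closure of A₁ under non-deleted edges inside A
    have hclose : ∀ x ∈ A₁, ∀ y ∈ A, MGAdj ends F x y → y ∈ A₁ := by
      intro x hx y hy hadj
      exact ⟨hy, hx.2.tail ⟨hx.1, hy, hadj⟩⟩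
    -- the two restricted cut pieces
    set C₁ : Set E := MGCutset ends A ∩ {e | ∃ x ∈ ends e, x ∈ A₁} with hC₁
    set C₂ : Set E := MGCutset ends A ∩ {e | ∃ x ∈ ends e, x ∈ A₂} with hC₂
    have hedge : ∀ e : E, ∀ x y : V, x ∈ ends e → y ∈ ends e → x ≠ y →
        ends e = s(x, y) := by
      intro e x y hx hy hxy
      exact ((Sym2.mem_and_mem_iff hxy).mp ⟨hx, hy⟩)
    have hsubc1 : MGCutset ends A₁ ⊆ C₁ ∪ D := by
      rintro e ⟨⟨x, hxe, hx1⟩, ⟨y, hye, hy1⟩⟩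
      by_cases hout : ∃ z ∈ ends e, z ∉ A
      · exact Or.inl ⟨⟨⟨x, hxe, hsub1 hx1⟩, hout⟩, ⟨x, hxe, hx1⟩⟩
      · push_neg at hout
        right
        by_contra heD
        have hxy : x ≠ y := fun h => hy1 (h ▸ hx1)
        have : y ∈ A₁ := hclose x hx1 y (hout y hye)
          ⟨e, ⟨hout, heD⟩, hedge e x y hxe hye hxy⟩
        exact hy1 this
    have hsubc2 : MGCutset ends A₂ ⊆ C₂ ∪ D := by
      rintro e ⟨⟨x, hxe, hx2⟩, ⟨y, hye, hy2⟩⟩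
      by_cases hout : ∃ z ∈ ends e, z ∉ A
      · exact Or.inl ⟨⟨⟨x, hxe, hsub2 hx2⟩, hout⟩, ⟨x, hxe, hx2⟩⟩
      · push_neg at hout
        right
        by_contra heD
        have hyA : y ∈ A := hout y hye
        have hy1 : y ∈ A₁ := by
          by_contra h
          exact hy2 ⟨hyA, h⟩
        have hxy : y ≠ x := fun h => hx2.2 (h ▸ hy1)
        have : x ∈ A₁ := hclose y hy1 x (hsub2 hx2)
          ⟨e, ⟨hout, heD⟩, hedge e y x hye hxe hxy⟩
        exact hx2.2 this
    have hdisj : Disjoint C₁ C₂ := by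
      rw [Set.disjoint_left]
      rintro e ⟨hcA, x, hxe, hx1⟩ ⟨_, y, hye, hy2⟩
      obtain ⟨z, hze, hz⟩ := hcA.2
      have hxy : x ≠ y := fun h => hy2.2 (h ▸ hx1)
      have := hedge e x y hxe hye hxy
      rw [this] at hze
      rcases Sym2.mem_iff.mp hze with h | h
      · exact hz (h ▸ hsub1 hx1)
      · exact hz (h ▸ hsub2 hy2)
    -- counting
    have hfin : ∀ S : Set E, S.Finite := fun S => S.toFinite
    have hDcard : Nat.card D = D.ncard := Nat.card_coe_set_eq D
    have hc1 : (MGCutset ends A₁).ncard ≤ C₁.ncard + D.ncard :=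
      le_trans (Set.ncard_le_ncard hsubc1 (hfin _)) (Set.ncard_union_le _ _)
    have hc2 : (MGCutset ends A₂).ncard ≤ C₂.ncard + D.ncard :=
      le_trans (Set.ncard_le_ncard hsubc2 (hfin _)) (Set.ncard_union_le _ _)
    have hcc : C₁.ncard + C₂.ncard ≤ (MGCutset ends A).ncard := by
      rw [← Set.ncard_union_eq hdisj (hfin _) (hfin _)]
      exact Set.ncard_le_ncard (Set.union_subset Set.inter_subset_left
        Set.inter_subset_left) (hfin _)
    have hmin : (MGCutset ends A₁).ncard ≤ 2 * k ∨ (MGCutset ends A₂).ncard ≤ 2 * k := by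
      omega
    -- cards
    have hAfin : A.Finite := A.toFinite
    have hAcard : Nat.card A = A.ncard := Nat.card_coe_set_eq A
    have hss1 : A₁ ⊂ A := ⟨hsub1, fun h => hv2.2 (h hv)⟩
    have hss2 : A₂ ⊂ A := ⟨hsub2, fun h => (h hu).2 hu1⟩
    have hlt1 : Nat.card A₁ ≤ n := by
      have := Set.ncard_lt_ncard hss1 hAfin
      rw [Nat.card_coe_set_eq]
      omega
    have hlt2 : Nat.card A₂ ≤ n := by
      have := Set.ncard_lt_ncard hss2 hAfin
      rw [Nat.card_coe_set_eq]
      omega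
    rcases hmin with h | h
    · exact ih A₁ hlt1 ⟨u, hu1⟩ h
    · exact ih A₂ hlt2 ⟨v, hv2⟩ h

/-- for every `k` and every multigraph `G`, there is a cut `(A, Aᶜ)`
with `A` nonempty, at most `2k` crossing edges, and `G[A]` `k`-edge-connected or a
single vertex. -/
theorem stmt0 (k : ℕ) (V E : Type) [Fintype V] [Fintype E] [Nonempty V]
    (ends : E → Sym2 V) :
    ∃ A : Set V, A.Nonempty ∧
      Nat.card {e : E // (∃ x ∈ ends e, x ∈ A) ∧ (∃ y ∈ ends e, y ∉ A)} ≤ 2 * k ∧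
      (MGEdgeConnOn ends A k ∨ Nat.card A = 1) := by
  have huniv : (MGCutset ends (Set.univ : Set V)).ncard ≤ 2 * k := by
    have : MGCutset ends (Set.univ : Set V) = ∅ := by
      ext e
      simp [MGCutset]
    simp [this]
  obtain ⟨B, hBne, hBcut, hBconn⟩ := mg_key ends k (Nat.card (Set.univ : Set V))
    Set.univ le_rfl Set.univ_nonempty huniv
  refine ⟨B, hBne, ?_, hBconn⟩
  have : Nat.card {e : E // (∃ x ∈ ends e, x ∈ B) ∧ (∃ y ∈ ends e, y ∉ B)}
      = (MGCutset ends B).ncard := Nat.card_coe_set_eq (MGCutset ends B)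
  omega
end

section
/- Let k be a positive integer and H a hypergraph all of whose hyperedges have size at most three. Then there is a cut (A,B) in H with A nonempty whose value is at most 3k (in particular its order is at most 3k) such that the induced hypergraph H[A] is k-edge-connected or has only one vertex. Here the value of (A,B) is defined as the sum over all hyperedges e meeting both A and B of |e ∩ A|. -/
open scoped Classical

/-- Adjacency in a hypergraph with hyperedges given as multisets, using edges in `F`. -/
def HAdj {V E : Type} (edges : E → Multiset V) (F : Set E) (u v : V) : Prop :=
  ∃ e ∈ F, u ∈ edges e ∧ v ∈ edges e

/-- The vertex set `A` is connected using only hyperedges in `F`. -/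
def HConnOn {V E : Type} (edges : E → Multiset V) (A : Set V) (F : Set E) : Prop :=
  ∀ u ∈ A, ∀ v ∈ A,
    Relation.ReflTransGen (fun x y => x ∈ A ∧ y ∈ A ∧ HAdj edges F x y) u v

/-- The induced hypergraph on `A` is `k`-edge-connected. -/
def HEdgeConnOn {V E : Type} (edges : E → Multiset V) (A : Set V) (k : ℕ) : Prop :=
  ∀ D : Set E, Nat.card D < k →
    HConnOn edges A {e | (∀ x ∈ edges e, x ∈ A) ∧ e ∉ D}

/-- The value of the cut `(A, Aᶜ)`: the sum over all hyperedges meeting both sides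
of the number of their vertices (with multiplicity) lying in `A`. -/
noncomputable def HCutVal {V E : Type} [Fintype E] (edges : E → Multiset V)
    (A : Set V) : ℕ :=
  ∑ e ∈ Finset.univ.filter
      (fun e : E => (∃ x ∈ edges e, x ∈ A) ∧ (∃ y ∈ edges e, y ∉ A)),
    ((edges e).filter (· ∈ A)).card

private lemma ite_irrel {p : Prop} (i i' : Decidable p) (n : ℕ) :
    @ite _ p i n 0 = @ite _ p i' n 0 := by congr 1


/-- in a hypergraph with hyperedges of size at most three, there is a
cut `(A, Aᶜ)` with `A` nonempty, value at most `3k`, such that `H[A]` is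
`k`-edge-connected or has only one vertex. -/
theorem stmt1 (k : ℕ) (hk : 0 < k) (V E : Type) [Fintype V] [Fintype E] [Nonempty V]
    (edges : E → Multiset V)
    (hne : ∀ e, edges e ≠ 0) (hsize : ∀ e, (edges e).card ≤ 3) :
    ∃ A : Set V, A.Nonempty ∧ HCutVal edges A ≤ 3 * k ∧
      (HEdgeConnOn edges A k ∨ Nat.card A = 1) := by
  have hex : ∃ n, ∃ A : Set V, A.Nonempty ∧ HCutVal edges A ≤ 3 * k ∧ Nat.card A = n := by
    refine ⟨Nat.card (Set.univ : Set V), Set.univ, Set.univ_nonempty, ?_, rfl⟩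
    have h : ∀ e : E, ¬((∃ x ∈ edges e, x ∈ (Set.univ : Set V)) ∧
        (∃ y ∈ edges e, y ∉ (Set.univ : Set V))) := by simp
    rw [HCutVal, Finset.sum_filter]
    exact le_trans (le_of_eq (Finset.sum_eq_zero fun e _ => if_neg (h e))) (Nat.zero_le _)
  obtain ⟨A, hAne, hAval, hAcard⟩ := Nat.find_spec hex
  refine ⟨A, hAne, hAval, ?_⟩
  by_contra hcon
  push_neg at hcon
  obtain ⟨hnc, -⟩ := hcon
  rw [HEdgeConnOn] at hnc
  push_neg at hnc
  obtain ⟨D, hDk, hDconn⟩ := hnc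
  rw [HConnOn] at hDconn
  push_neg at hDconn
  obtain ⟨u, hu, v, hv, huv⟩ := hDconn
  set F : Set E := {e | (∀ x ∈ edges e, x ∈ A) ∧ e ∉ D} with hF
  set R : V → V → Prop := fun x y => x ∈ A ∧ y ∈ A ∧ HAdj edges F x y with hR
  set A₁ : Set V := {x | x ∈ A ∧ Relation.ReflTransGen R u x} with hA₁
  set A₂ : Set V := A \ A₁ with hA₂
  -- facts proved while the bodies are still transparent
  have hA₁A : A₁ ⊆ A := fun x hx => hx.1
  have huA₁ : u ∈ A₁ := ⟨hu, Relation.ReflTransGen.refl⟩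
  have hvnA₁ : v ∉ A₁ := fun hvz => huv hvz.2
  have hvA₂ : v ∈ A₂ := ⟨hv, hvnA₁⟩
  have hA₂A : A₂ ⊆ A := fun x hx => hx.1
  have hdisj : ∀ x, x ∈ A₁ → x ∉ A₂ := fun x h1 h2 => h2.2 h1
  have hcover : ∀ x, x ∈ A → x ∉ A₁ → x ∈ A₂ := fun x hx h1 => ⟨hx, h1⟩
  have hFmem : ∀ e : E, (∀ x ∈ edges e, x ∈ A) → e ∉ D → e ∈ F := fun e h1 h2 => ⟨h1, h2⟩
  have hclose : ∀ e ∈ F, ∀ x ∈ edges e, x ∈ A₁ → ∀ y ∈ edges e, y ∈ A₁ := by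
    intro e he x hx hxA₁ y hy
    exact ⟨he.1 y hy, hxA₁.2.tail ⟨hxA₁.1, he.1 y hy, e, he, hx, hy⟩⟩
  clear_value F R A₁ A₂
  clear hF hR hA₁ hA₂
  set c : Set V → E → ℕ := fun B e =>
    if (∃ x ∈ edges e, x ∈ B) ∧ (∃ y ∈ edges e, y ∉ B) then
      ((edges e).filter (· ∈ B)).card else 0 with hc
  have hval : ∀ B : Set V, HCutVal edges B = ∑ e : E, c B e := by
    intro B
    rw [HCutVal, Finset.sum_filter]
    exact Finset.sum_congr rfl (fun e _ => ite_irrel _ _ _)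
  have hfiltersum : ∀ e : E, ((edges e).filter (· ∈ A₁)).card
      + ((edges e).filter (· ∈ A₂)).card = ((edges e).filter (· ∈ A)).card := by
    intro e
    rw [← Multiset.card_add, Multiset.filter_add_filter]
    have h1 : (edges e).filter (fun a => a ∈ A₁ ∧ a ∈ A₂) = 0 :=
      Multiset.filter_eq_nil.mpr (fun a _ h => hdisj a h.1 h.2)
    have h2 : (edges e).filter (fun a => a ∈ A₁ ∨ a ∈ A₂) = (edges e).filter (· ∈ A) := by
      apply Multiset.filter_congr
      intro a _
      constructor
      · rintro (h | h)
        · exact hA₁A h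
        · exact hA₂A h
      · intro h
        by_cases h' : a ∈ A₁
        · exact Or.inl h'
        · exact Or.inr (hcover a h h')
    rw [h1, h2, add_zero]
  have hle1 : ∀ e : E, c A₁ e ≤ ((edges e).filter (· ∈ A₁)).card := by
    intro e; rw [hc]; dsimp only; split <;> omega
  have hle2 : ∀ e : E, c A₂ e ≤ ((edges e).filter (· ∈ A₂)).card := by
    intro e; rw [hc]; dsimp only; split <;> omega
  have key : ∀ e : E, c A₁ e + c A₂ e ≤ c A e + (if e ∈ D then 3 else 0) := by
    intro e
    by_cases heD : e ∈ D
    · rw [if_pos heD]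
      have h3 : ((edges e).filter (· ∈ A₁)).card + ((edges e).filter (· ∈ A₂)).card ≤ 3 := by
        rw [hfiltersum e]
        exact le_trans (Multiset.card_le_card (Multiset.filter_le _ _)) (hsize e)
      have := hle1 e; have := hle2 e
      omega
    · rw [if_neg heD, add_zero]
      by_cases hsub : ∀ x ∈ edges e, x ∈ A
      · have heF : e ∈ F := hFmem e hsub heD
        have h1 : c A₁ e = 0 := by
          rw [hc]; dsimp only; rw [if_neg]
          rintro ⟨⟨x, hx, hxA₁⟩, ⟨y, hy, hyA₁⟩⟩
          exact hyA₁ (hclose e heF x hx hxA₁ y hy)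
        have h2 : c A₂ e = 0 := by
          rw [hc]; dsimp only; rw [if_neg]
          rintro ⟨⟨x, hx, hxA₂⟩, ⟨y, hy, hyA₂⟩⟩
          have hyA₁ : y ∈ A₁ := by
            by_contra hy'
            exact hyA₂ (hcover y (hsub y hy) hy')
          exact hdisj x (hclose e heF y hy hyA₁ x hx) hxA₂
        simp [h1, h2]
      · push_neg at hsub
        obtain ⟨w, hw, hwA⟩ := hsub
        by_cases hmA : ∃ x ∈ edges e, x ∈ A
        · have hcA : c A e = ((edges e).filter (· ∈ A)).card := by
            rw [hc]; dsimp only; rw [if_pos ⟨hmA, ⟨w, hw, hwA⟩⟩]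
          rw [hcA, ← hfiltersum e]
          exact add_le_add (hle1 e) (hle2 e)
        · push_neg at hmA
          have h1 : ((edges e).filter (· ∈ A₁)).card = 0 := by
            rw [Multiset.card_eq_zero]
            exact Multiset.filter_eq_nil.mpr (fun a ha haA₁ => hmA a ha (hA₁A haA₁))
          have h2 : ((edges e).filter (· ∈ A₂)).card = 0 := by
            rw [Multiset.card_eq_zero]
            exact Multiset.filter_eq_nil.mpr (fun a ha haA₂ => hmA a ha (hA₂A haA₂))
          have := hle1 e; have := hle2 e
          omega
  have hsum1 : HCutVal edges A₁ + HCutVal edges A₂ ≤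
      HCutVal edges A + ∑ e : E, (if e ∈ D then 3 else 0) := by
    rw [hval A₁, hval A₂, hval A, ← Finset.sum_add_distrib, ← Finset.sum_add_distrib]
    exact Finset.sum_le_sum (fun e _ => key e)
  have hDsum : ∑ e : E, (if e ∈ D then 3 else 0) ≤ 3 * (k - 1) := by
    have h1 : ∑ e : E, (if e ∈ D then 3 else 0)
        = (Finset.univ.filter (fun e : E => e ∈ D)).card * 3 := by
      rw [← Finset.sum_filter, Finset.sum_const, smul_eq_mul]
    have h2 : (Finset.univ.filter (fun e : E => e ∈ D)).card = Nat.card D := by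
      rw [Nat.card_eq_fintype_card, Fintype.card_subtype]
    rw [h1, h2]
    omega
  have hmin : HCutVal edges A₁ ≤ 3 * k ∨ HCutVal edges A₂ ≤ 3 * k := by omega
  have hcard : ∀ B : Set V, B ⊆ A → (∃ w, w ∈ A ∧ w ∉ B) → Nat.card B < Nat.card A := by
    rintro B hBA ⟨w, hwA, hwB⟩
    have hne' : B ≠ A := fun h => hwB (h ▸ hwA)
    have hss : B ⊂ A := hBA.ssubset_of_ne hne'
    rw [Nat.card_coe_set_eq, Nat.card_coe_set_eq]
    exact Set.ncard_lt_ncard hss (Set.toFinite A)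
  rcases hmin with h | h
  · have hlt : Nat.card A₁ < Nat.find hex := by
      rw [← hAcard]
      exact hcard A₁ hA₁A ⟨v, hv, hvnA₁⟩
    exact Nat.find_min hex hlt ⟨A₁, ⟨u, huA₁⟩, h, rfl⟩
  · have hlt : Nat.card A₂ < Nat.find hex := by
      rw [← hAcard]
      exact hcard A₂ hA₂A ⟨u, hu, fun h' => hdisj u huA₁ h'⟩
    exact Nat.find_min hex hlt ⟨A₂, ⟨v, hvA₂⟩, h, rfl⟩
end

section
/- Every 3k-edge-connected hypergraph with hyperedges of size at most three is k-partition-connected; that is, for any partition of its vertex set into p nonempty parts, the number of hyperedges containing vertices in more than one part is at least k(p-1). -/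
/-- A hypergraph is `k`-edge-connected: removing any fewer than `k` hyperedges
leaves it connected. -/
def HEdgeConn {V E : Type} (edges : E → Multiset V) (k : ℕ) : Prop :=
  ∀ D : Set E, Nat.card D < k →
    HConnOn edges Set.univ {e | e ∉ D}

/-- A hypergraph is `k`-partition-connected: for every partition of the vertex set
into `p` nonempty parts, at least `k(p-1)` hyperedges meet more than one part. -/
def HPartConn {V E : Type} (edges : E → Multiset V) (k : ℕ) : Prop :=
  ∀ (p : ℕ) (P : Fin p → Set V), (∀ i, (P i).Nonempty) →
    (Pairwise fun i j => Disjoint (P i) (P j)) → (∀ v : V, ∃ i, v ∈ P i) →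
    k * (p - 1) ≤
      Nat.card {e : E // ∃ i j, i ≠ j ∧
        (∃ x ∈ edges e, x ∈ P i) ∧ (∃ y ∈ edges e, y ∈ P j)}

/-- every `3k`-edge-connected hypergraph with hyperedges of size at
most three is `k`-partition-connected. -/
theorem stmt2 (k : ℕ) (V E : Type) [Fintype V] [Fintype E]
    (edges : E → Multiset V)
    (hne : ∀ e, edges e ≠ 0) (hsize : ∀ e, (edges e).card ≤ 3)
    (hconn : HEdgeConn edges (3 * k)) :
    HPartConn edges k := by
  classical
  intro p P hPne hdisj hcov
  rcases Nat.lt_or_ge p 2 with hp | hp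
  · interval_cases p <;> simp
  -- notation
  set Cross : Finset E := Finset.univ.filter (fun e : E => ∃ i j : Fin p, i ≠ j ∧
      (∃ x ∈ edges e, x ∈ P i) ∧ (∃ y ∈ edges e, y ∈ P j)) with hCross
  -- Step 1: each part's cut has ≥ 3k edges
  have hcut : ∀ i : Fin p, 3 * k ≤
      (Finset.univ.filter (fun e => (∃ x ∈ edges e, x ∈ P i) ∧ (∃ y ∈ edges e, y ∉ P i))).card := by
    intro i
    by_contra h
    push_neg at h
    set D : Set E := {e | (∃ x ∈ edges e, x ∈ P i) ∧ (∃ y ∈ edges e, y ∉ P i)} with hD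
    have hDcard : Nat.card D < 3 * k := by
      rw [Nat.card_eq_fintype_card]
      simpa [D, Fintype.card_subtype] using h
    have hcon := hconn D hDcard
    obtain ⟨u, hu⟩ := hPne i
    obtain ⟨j, hj⟩ : ∃ j : Fin p, j ≠ i :=
      Fintype.exists_ne_of_one_lt_card (by simp; omega) i
    obtain ⟨v, hv⟩ := hPne j
    have hvi : v ∉ P i := fun hvi => Set.disjoint_left.mp (hdisj hj) hv hvi
    have hreach := hcon u (Set.mem_univ u) v (Set.mem_univ v)
    have hstay : ∀ w, Relation.ReflTransGen
        (fun x y => x ∈ (Set.univ : Set V) ∧ y ∈ (Set.univ : Set V) ∧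
          HAdj edges {e | e ∉ D} x y) u w → w ∈ P i := by
      intro w hw
      induction hw with
      | refl => exact hu
      | tail _ hbc ih =>
        obtain ⟨-, -, e, he, hxe, hye⟩ := hbc
        by_contra hc
        exact he ⟨⟨_, hxe, ih⟩, ⟨_, hye, hc⟩⟩
    exact hvi (hstay v hreach)
  -- Step 2: an edge crosses at most 3 parts
  have hmeet3 : ∀ e : E, (Finset.univ.filter (fun i : Fin p => ∃ x ∈ edges e, x ∈ P i)).card ≤ 3 := by
    intro e
    obtain ⟨v0, hv0⟩ := Multiset.exists_mem_of_ne_zero (hne e)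
    have : (Finset.univ.filter (fun i : Fin p => ∃ x ∈ edges e, x ∈ P i)).card
        ≤ (edges e).toFinset.card := by
      apply Finset.card_le_card_of_injOn
          (fun i => if h : ∃ x ∈ edges e, x ∈ P i then h.choose else v0)
      · intro i hi
        simp only [Finset.coe_filter, Finset.mem_filter, Set.mem_setOf_eq] at hi
        simp only [dif_pos hi.2]
        exact Multiset.mem_toFinset.mpr hi.2.choose_spec.1
      · intro i hi j hj hij
        simp only [Finset.coe_filter, Set.mem_setOf_eq] at hi hj
        simp only [dif_pos hi.2, dif_pos hj.2] at hij
        by_contra hne'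
        exact Set.disjoint_left.mp (hdisj hne') (hij ▸ hi.2.choose_spec.2) hj.2.choose_spec.2
    calc _ ≤ (edges e).toFinset.card := this
      _ ≤ (edges e).card := Multiset.toFinset_card_le _
      _ ≤ 3 := hsize e
  -- Step 3: double counting
  have hswap : (∑ i : Fin p,
      (Finset.univ.filter (fun e => (∃ x ∈ edges e, x ∈ P i) ∧ (∃ y ∈ edges e, y ∉ P i))).card)
      = ∑ e : E, (Finset.univ.filter (fun i : Fin p =>
          (∃ x ∈ edges e, x ∈ P i) ∧ (∃ y ∈ edges e, y ∉ P i))).card := by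
    simp only [Finset.card_filter]
    exact Finset.sum_comm
  have hzero : ∀ e : E, e ∉ Cross →
      (Finset.univ.filter (fun i : Fin p =>
          (∃ x ∈ edges e, x ∈ P i) ∧ (∃ y ∈ edges e, y ∉ P i))).card = 0 := by
    intro e he
    rw [Finset.card_eq_zero, Finset.filter_eq_empty_iff]
    rintro i - ⟨hx, y, hy, hyP⟩
    obtain ⟨j, hjP⟩ := hcov y
    have hij : i ≠ j := fun h => hyP (h ▸ hjP)
    exact he (by simp [hCross]; exact ⟨i, j, hij, hx, y, hy, hjP⟩)
  have hsum_le : ∑ e : E, (Finset.univ.filter (fun i : Fin p =>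
          (∃ x ∈ edges e, x ∈ P i) ∧ (∃ y ∈ edges e, y ∉ P i))).card ≤ 3 * Cross.card := by
    rw [← Finset.sum_subset (Finset.subset_univ Cross) (fun e _ he => hzero e he)]
    calc _ ≤ ∑ _e ∈ Cross, 3 := by
            apply Finset.sum_le_sum
            intro e _
            refine le_trans (Finset.card_le_card ?_) (hmeet3 e)
            intro i hi
            simp only [Finset.mem_filter] at hi ⊢
            exact ⟨hi.1, hi.2.1⟩
      _ = 3 * Cross.card := by rw [Finset.sum_const, smul_eq_mul, mul_comm]
  have hmain : 3 * k * p ≤ 3 * Cross.card := by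
    calc 3 * k * p = ∑ _i : Fin p, 3 * k := by simp [mul_comm]
      _ ≤ _ := Finset.sum_le_sum (fun i _ => hcut i)
      _ = _ := hswap
      _ ≤ 3 * Cross.card := hsum_le
  have hkp : k * p ≤ Cross.card := by
    have := hmain
    rw [mul_assoc] at this
    exact Nat.le_of_mul_le_mul_left this (by norm_num)
  have : Nat.card {e : E // ∃ i j, i ≠ j ∧
        (∃ x ∈ edges e, x ∈ P i) ∧ (∃ y ∈ edges e, y ∈ P j)} = Cross.card := by
    rw [Nat.card_eq_fintype_card, Fintype.card_subtype, hCross]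
  rw [this]
  calc k * (p - 1) ≤ k * p := Nat.mul_le_mul_left k (Nat.sub_le p 1)
    _ ≤ Cross.card := hkp
end

section
/- For every multigraph G there exist two edge-disjoint spanning subgraphs H₀ and H₁ partitioning the edges of G such that for every vertex v, both |deg_{H₀}(v) − deg_G(v)/2| ≤ 1 and |deg_{H₁}(v) − deg_G(v)/2| ≤ 1. -/
open scoped Classical

/-- The number of times `v` occurs as an endpoint of the unordered pair `p`
(a loop at `v` counts twice). -/
noncomputable def sym2Count {V : Type} (v : V) : Sym2 V → ℕ :=
  Sym2.lift ⟨fun a b => (if a = v then 1 else 0) + (if b = v then 1 else 0),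
    fun a b => by ring⟩

/-- The degree of `v` in the spanning subgraph with edge set `F` (loops count twice). -/
noncomputable def mdeg {V E : Type} [Fintype E] (ends : E → Sym2 V)
    (F : Set E) (v : V) : ℕ :=
  ∑ e ∈ Finset.univ.filter (· ∈ F), sym2Count v (ends e)

namespace Stmt5

variable {V E : Type}

lemma sym2Count_mk (v a b : V) :
    sym2Count v (s(a, b)) = (if a = v then 1 else 0) + (if b = v then 1 else 0) := rfl

/-- incidence count of `v` at edge `e`, as an integer. -/
noncomputable def inc (ends : E → Sym2 V) (v : V) (e : E) : ℤ := sym2Count v (ends e)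

lemma inc_eq (ends : E → Sym2 V) (v : V) {e : E} {a b : V} (h : ends e = s(a, b)) :
    inc ends v e = (if a = v then 1 else 0) + (if b = v then 1 else 0) := by
  simp only [inc, h, sym2Count_mk]
  push_cast
  split_ifs <;> simp

lemma inc_nonneg (ends : E → Sym2 V) (v : V) (e : E) : 0 ≤ inc ends v e := by
  simp [inc]

lemma inc_eq_zero (ends : E → Sym2 V) {v : V} {e : E} (h : v ∉ ends e) :
    inc ends v e = 0 := by
  obtain ⟨a, b, hab⟩ : ∃ a b, ends e = s(a, b) :=
    Sym2.ind (fun a b => ⟨a, b, rfl⟩) (ends e)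
  rw [inc_eq ends v hab]
  rw [hab, Sym2.mem_iff] at h
  push_neg at h
  rw [if_neg (fun hh => h.1 hh.symm), if_neg (fun hh => h.2 hh.symm)]
  ring

lemma mem_of_inc_ne_zero (ends : E → Sym2 V) {v : V} {e : E} (h : inc ends v e ≠ 0) :
    v ∈ ends e := by
  by_contra hc; exact h (inc_eq_zero ends hc)

/-- Walks: a list of edges `es` from `a` to `b`. -/
inductive IsWalk (ends : E → Sym2 V) : List E → V → V → Prop
  | nil (v : V) : IsWalk ends [] v v
  | cons {e : E} {a m b : V} {es : List E} (h : ends e = s(a, m))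
      (t : IsWalk ends es m b) : IsWalk ends (e :: es) a b

/-- Alternating (signed) incidence sum along a list of edges. -/
noncomputable def altsum (ends : E → Sym2 V) (v : V) : List E → ℤ
  | [] => 0
  | e :: es => inc ends v e - altsum ends v es

/-- parity of the incidence sum of a walk. -/
lemma wsum_parity {ends : E → Sym2 V} {es : List E} {a b : V}
    (hw : IsWalk ends es a b) (v : V) :
    (es.map (inc ends v)).sum % 2 =
      ((if a = v then 1 else 0) + (if b = v then (1:ℤ) else 0)) % 2 := by
  induction hw with
  | nil w => simp; split_ifs <;> norm_num
  | cons h t ih =>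
    rename_i e a m b es
    simp only [List.map_cons, List.sum_cons]
    rw [inc_eq ends v h]
    omega

/-- alternating sum along a nonempty walk. -/
lemma altsum_eq {ends : E → Sym2 V} {es : List E} {a b : V}
    (hw : IsWalk ends es a b) (hne : es ≠ []) :
    ∃ σ : ℤ, (σ = 1 ∨ σ = -1) ∧ ∀ v : V,
      altsum ends v es = (if a = v then 1 else 0) + σ * (if b = v then 1 else 0) := by
  induction hw with
  | nil w => exact absurd rfl hne
  | cons h t ih =>
    rename_i e a m b es
    rcases es with _ | ⟨e', es'⟩
    · cases t
      refine ⟨1, Or.inl rfl, fun v => ?_⟩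
      simp only [altsum, inc_eq ends v h]
      ring
    · obtain ⟨σ, hσ, hval⟩ := ih (by simp)
      refine ⟨-σ, by omega, fun v => ?_⟩
      simp only [altsum] at hval ⊢
      rw [hval v, inc_eq ends v h]
      ring

end Stmt5
namespace Stmt5
variable {V E : Type}

/-- Color the edges of a list alternately `ε, -ε, ε, …`, leaving other edges to `g`. -/
noncomputable def altcolor (g : E → ℤ) : ℤ → List E → E → ℤ
  | _, [] => g
  | ε, e :: es => fun x => if x = e then ε else altcolor g (-ε) es x

lemma altcolor_notmem {g : E → ℤ} {x : E} :
    ∀ {es : List E} (_ : x ∉ es) (ε : ℤ), altcolor g ε es x = g x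
  | [], _, _ => rfl
  | e :: es, hx, ε => by
    simp only [List.mem_cons, not_or] at hx
    simp only [altcolor, if_neg hx.1]
    exact altcolor_notmem hx.2 (-ε)

lemma altcolor_pm {g : E → ℤ} (hg : ∀ x, g x = 1 ∨ g x = -1) :
    ∀ (es : List E) (ε : ℤ) (_ : ε = 1 ∨ ε = -1) (x : E),
      altcolor g ε es x = 1 ∨ altcolor g ε es x = -1
  | [], ε, _, x => hg x
  | e :: es, ε, hε, x => by
    simp only [altcolor]
    split_ifs
    · exact hε
    · exact altcolor_pm hg es (-ε) (by omega) x

lemma altcolor_sum (ends : E → Sym2 V) {g : E → ℤ} :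
    ∀ {es : List E} (_ : es.Nodup) (ε : ℤ) (v : V),
      (es.map (fun e => altcolor g ε es e * inc ends v e)).sum = ε * altsum ends v es
  | [], _, ε, v => by simp [altsum]
  | e :: es, hnd, ε, v => by
    simp only [List.nodup_cons] at hnd
    simp only [List.map_cons, List.sum_cons, altcolor, if_pos rfl]
    have hcongr : (es.map (fun x => (if x = e then ε else altcolor g (-ε) es x) * inc ends v x))
        = es.map (fun x => altcolor g (-ε) es x * inc ends v x) := by
      refine List.map_congr_left (fun x hx => ?_)
      rw [if_neg (fun h : x = e => hnd.1 (h ▸ hx))]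
    rw [hcongr, altcolor_sum ends hnd.2 (-ε) v]
    simp only [altsum, if_true]
    ring

/-- signed degree sum. -/
noncomputable def Dsum (ends : E → Sym2 V) (s : Finset E) (f : E → ℤ) (v : V) : ℤ :=
  ∑ e ∈ s, f e * inc ends v e

/-- degree (as integer). -/
noncomputable def Dg (ends : E → Sym2 V) (s : Finset E) (v : V) : ℤ :=
  ∑ e ∈ s, inc ends v e

lemma Dsum_altcolor (ends : E → Sym2 V) {g : E → ℤ} {es : List E} {s : Finset E}
    (hnd : es.Nodup) (hss : ∀ e ∈ es, e ∈ s) (ε : ℤ) (v : V) :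
    Dsum ends s (altcolor g ε es) v
      = ε * altsum ends v es + Dsum ends (s \ es.toFinset) g v := by
  have hsub : es.toFinset ⊆ s := fun e he => hss e (List.mem_toFinset.mp he)
  unfold Dsum
  rw [← Finset.sum_sdiff hsub]
  have h1 : ∑ e ∈ es.toFinset, altcolor g ε es e * inc ends v e = ε * altsum ends v es := by
    rw [List.sum_toFinset _ hnd, altcolor_sum ends hnd ε v]
  have h2 : ∑ e ∈ s \ es.toFinset, altcolor g ε es e * inc ends v e
      = ∑ e ∈ s \ es.toFinset, g e * inc ends v e := by
    refine Finset.sum_congr rfl (fun e he => ?_)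
    rw [altcolor_notmem (fun hmem => ((Finset.mem_sdiff.mp he).2 (List.mem_toFinset.mpr hmem))) ε]
  rw [h1, h2]; ring

lemma Dg_sdiff (ends : E → Sym2 V) {es : List E} {s : Finset E}
    (hnd : es.Nodup) (hss : ∀ e ∈ es, e ∈ s) (v : V) :
    Dg ends (s \ es.toFinset) v = Dg ends s v - (es.map (inc ends v)).sum := by
  have hsub : es.toFinset ⊆ s := fun e he => hss e (List.mem_toFinset.mp he)
  unfold Dg
  rw [← Finset.sum_sdiff hsub, List.sum_toFinset _ hnd]
  ring

lemma Dg_eq_wsum (ends : E → Sym2 V) {es : List E} {s : Finset E} {a : V}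
    (hnd : es.Nodup) (hss : ∀ e ∈ es, e ∈ s)
    (hmax : ∀ e ∈ s, a ∈ ends e → e ∈ es) :
    Dg ends s a = (es.map (inc ends a)).sum := by
  have hsub : es.toFinset ⊆ s := fun e he => hss e (List.mem_toFinset.mp he)
  unfold Dg
  rw [← Finset.sum_sdiff hsub, List.sum_toFinset _ hnd]
  have h0 : ∑ e ∈ s \ es.toFinset, inc ends a e = 0 := by
    refine Finset.sum_eq_zero (fun e he => ?_)
    rcases Finset.mem_sdiff.mp he with ⟨hes, hnes⟩
    refine inc_eq_zero ends (fun hmem => hnes (List.mem_toFinset.mpr (hmax e hes hmem)))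
  rw [h0]; ring

end Stmt5
namespace Stmt5
variable {V E : Type}

lemma walk_length_le {es : List E} {s : Finset E}
    (hnd : es.Nodup) (hss : ∀ e ∈ es, e ∈ s) : es.length ≤ s.card := by
  have hsub : es.toFinset ⊆ s := fun e he => hss e (List.mem_toFinset.mp he)
  calc es.length = es.toFinset.card := (List.toFinset_card_of_nodup hnd).symm
    _ ≤ s.card := Finset.card_le_card hsub

/-- Existence of a maximal trail ending at `u`: all edges of `s` at its other
endpoint `a` are used by the trail. -/
lemma maxTrail (ends : E → Sym2 V) (s : Finset E) (u : V) (e₀ : E)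
    (he₀ : e₀ ∈ s) (hu : u ∈ ends e₀) :
    ∃ (es : List E) (a : V), es ≠ [] ∧ es.Nodup ∧ (∀ e ∈ es, e ∈ s) ∧
      IsWalk ends es a u ∧ ∀ e ∈ s, a ∈ ends e → e ∈ es := by
  set P : ℕ → Prop := fun n => ∃ (es : List E) (a : V),
    es.length = n ∧ es ≠ [] ∧ es.Nodup ∧ (∀ e ∈ es, e ∈ s) ∧ IsWalk ends es a u with hP
  have hbound : ∀ n, P n → n ≤ s.card := by
    rintro n ⟨es, a, hlen, _, hnd, hss, _⟩
    exact hlen ▸ walk_length_le hnd hss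
  have hP1 : P 1 := by
    obtain ⟨w, hw⟩ := Sym2.mem_iff_exists.mp hu
    exact ⟨[e₀], w, rfl, by simp, by simp, by simpa using he₀,
      IsWalk.cons (hw.trans (Sym2.eq_swap)) (IsWalk.nil u)⟩
  have hcard1 : 1 ≤ s.card := hbound 1 hP1
  set N := Nat.findGreatest P s.card with hN
  have hPN : P N := Nat.findGreatest_spec hcard1 hP1
  obtain ⟨es, a, hlen, hne, hnd, hss, hwalk⟩ := hPN
  refine ⟨es, a, hne, hnd, hss, hwalk, ?_⟩
  intro e he hae
  by_contra hnotin
  obtain ⟨w, hw⟩ := Sym2.mem_iff_exists.mp hae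
  have hPN1 : P (N + 1) := by
    refine ⟨e :: es, w, by simp [hlen], by simp, ?_, ?_, ?_⟩
    · exact List.nodup_cons.mpr ⟨hnotin, hnd⟩
    · intro x hx
      rcases List.mem_cons.mp hx with h | h
      · exact h ▸ he
      · exact hss x h
    · exact IsWalk.cons (hw.trans Sym2.eq_swap) hwalk
  have hle : N + 1 ≤ s.card := hbound _ hPN1
  exact Nat.findGreatest_is_greatest (Nat.lt_succ_self N) hle hPN1

end Stmt5
namespace Stmt5
variable {V E : Type}

/-- Given a maximal trail from `a` to `u`, remaining degrees drop by the walk's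
incidence sum; packaged facts used in both main lemmas. -/
lemma trail_step (ends : E → Sym2 V) {s : Finset E} {es : List E} {a u : V}
    (hne : es ≠ []) (hnd : es.Nodup) (hss : ∀ e ∈ es, e ∈ s)
    (hwalk : IsWalk ends es a u) :
    (s \ es.toFinset).card < s.card ∧
    (∀ v, Dg ends (s \ es.toFinset) v = Dg ends s v - (es.map (inc ends v)).sum) := by
  constructor
  · have hsub : es.toFinset ⊆ s := fun e he => hss e (List.mem_toFinset.mp he)
    have hnonempty : es.toFinset.Nonempty := by
      rcases es with _ | ⟨e, es⟩
      · exact absurd rfl hne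
      · exact ⟨e, by simp⟩
    have := Finset.card_sdiff_of_subset hsub
    have h2 := Finset.card_pos.mpr hnonempty
    have h3 := Finset.card_le_card hsub
    omega
  · exact fun v => Dg_sdiff ends hnd hss v

/-- Main lemma, even case: greedy alternating coloring of closed trails. -/
lemma lemEven (ends : E → Sym2 V) : ∀ (n : ℕ) (s : Finset E), s.card ≤ n →
    (∀ v, Even (Dg ends s v)) → ∀ (d : V → ℤ), (∀ v, |d v| ≤ 2) →
    ∃ f : E → ℤ, (∀ e, f e = 1 ∨ f e = -1) ∧ ∀ v, |d v + Dsum ends s f v| ≤ 2 := by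
  intro n
  induction n with
  | zero =>
    intro s hcard _ d hd
    have : s = ∅ := Finset.card_eq_zero.mp (Nat.le_zero.mp hcard)
    subst this
    exact ⟨fun _ => 1, fun e => Or.inl rfl, fun v => by simpa [Dsum] using hd v⟩
  | succ n ih =>
    intro s hcard hev d hd
    rcases Finset.eq_empty_or_nonempty s with rfl | ⟨e₀, he₀⟩
    · exact ⟨fun _ => 1, fun e => Or.inl rfl, fun v => by simpa [Dsum] using hd v⟩
    · obtain ⟨u, w₀, hu⟩ : ∃ u w, ends e₀ = s(u, w) :=
        Sym2.ind (fun a b => ⟨a, b, rfl⟩) (ends e₀)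
      obtain ⟨es, a, hne, hnd, hss, hwalk, hmax⟩ :=
        maxTrail ends s u e₀ he₀ (hu ▸ Sym2.mem_mk_left u w₀)
      -- the trail is closed: a = u
      have hpar := wsum_parity hwalk a
      have hDga : Dg ends s a = (es.map (inc ends a)).sum := Dg_eq_wsum ends hnd hss hmax
      have hau : a = u := by
        by_contra hne'
        have heva := hev a
        rw [Int.even_iff] at heva
        rw [hDga] at heva
        rw [if_pos rfl, if_neg (fun h : u = a => hne' h.symm)] at hpar
        omega
      subst hau
      -- alternating sum of the closed trail
      obtain ⟨σ, hσ, hval⟩ := altsum_eq hwalk hne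
      set ε : ℤ := if 0 ≤ d a then -1 else 1 with hε
      set d' : V → ℤ := fun v => d v + ε * altsum ends v es with hd'
      have hd'le : ∀ v, |d' v| ≤ 2 := by
        intro v
        simp only [hd', hval v]
        rcases eq_or_ne a v with rfl | hav
        · have h1 := hd a
          rw [abs_le] at h1 ⊢
          simp only [if_pos rfl, if_true]
          rcases hσ with rfl | rfl <;> simp only [hε] <;> split_ifs with h <;>
            constructor <;> linarith
        · simp only [if_neg hav, mul_zero, add_zero, mul_zero]
          simpa using hd v
      obtain ⟨hcard', hDg'⟩ := trail_step ends hne hnd hss hwalk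
      have hev' : ∀ v, Even (Dg ends (s \ es.toFinset) v) := by
        intro v
        rw [hDg' v, Int.even_sub]
        have hp := wsum_parity hwalk v
        constructor
        · intro _
          rw [Int.even_iff]; omega
        · intro _; exact hev v
      obtain ⟨f', hf'pm, hf'⟩ := ih (s \ es.toFinset) (by omega) hev' d' hd'le
      refine ⟨altcolor f' ε es, altcolor_pm hf'pm es ε (by simp only [hε]; split_ifs <;> simp), ?_⟩
      intro v
      rw [Dsum_altcolor ends hnd hss ε v]
      have := hf' v
      simp only [hd'] at this
      calc |d v + (ε * altsum ends v es + Dsum ends (s \ es.toFinset) f' v)|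
          = |d v + ε * altsum ends v es + Dsum ends (s \ es.toFinset) f' v| := by ring_nf
        _ ≤ 2 := this
end Stmt5
namespace Stmt5
variable {V E : Type}

/-- Main lemma: peel off open trails between odd-degree vertices, then use `lemEven`. -/
lemma lemMain (ends : E → Sym2 V) : ∀ (n : ℕ) (s : Finset E), s.card ≤ n →
    ∀ (d : V → ℤ), (∀ v, |d v| ≤ 2) → (∀ v, ¬ Even (Dg ends s v) → d v = 0) →
    ∃ f : E → ℤ, (∀ e, f e = 1 ∨ f e = -1) ∧ ∀ v, |d v + Dsum ends s f v| ≤ 2 := by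
  intro n
  induction n with
  | zero =>
    intro s hcard d hd _
    have : s = ∅ := Finset.card_eq_zero.mp (Nat.le_zero.mp hcard)
    subst this
    exact ⟨fun _ => 1, fun e => Or.inl rfl, fun v => by simpa [Dsum] using hd v⟩
  | succ n ih =>
    intro s hcard d hd hodd
    by_cases hev : ∀ v, Even (Dg ends s v)
    · exact lemEven ends s.card s le_rfl hev d hd
    · push_neg at hev
      obtain ⟨u, hu⟩ := hev
      -- u has an incident edge
      have hDgu : Dg ends s u ≠ 0 := fun h => hu (h ▸ Even.zero)
      obtain ⟨e₀, he₀, hinc⟩ := Finset.exists_ne_zero_of_sum_ne_zero hDgu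
      have humem : u ∈ ends e₀ := mem_of_inc_ne_zero ends hinc
      obtain ⟨es, a, hne, hnd, hss, hwalk, hmax⟩ := maxTrail ends s u e₀ he₀ humem
      -- the trail is open: a ≠ u, and a has odd degree
      have hpar := wsum_parity hwalk a
      have hDga : Dg ends s a = (es.map (inc ends a)).sum := Dg_eq_wsum ends hnd hss hmax
      have hau : a ≠ u := by
        rintro rfl
        apply hu
        rw [Int.even_iff, hDga]
        simp only [if_pos rfl] at hpar
        omega
      have hodda : ¬ Even (Dg ends s a) := by
        rw [Int.even_iff, hDga]
        rw [if_pos rfl, if_neg (fun h : u = a => hau h.symm)] at hpar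
        omega
      -- color the open trail with ε = 1
      obtain ⟨σ, hσ, hval⟩ := altsum_eq hwalk hne
      set d' : V → ℤ := fun v => d v + 1 * altsum ends v es with hd'
      have hda : d a = 0 := hodd a hodda
      have hdu : d u = 0 := hodd u hu
      have hd'le : ∀ v, |d' v| ≤ 2 := by
        intro v
        simp only [hd', hval v, one_mul]
        rcases eq_or_ne a v with rfl | hav
        · rw [if_pos rfl, if_neg (fun h : u = a => hau h.symm), hda]
          norm_num
        · rcases eq_or_ne u v with rfl | huv
          · rw [if_neg hav, if_pos rfl, hdu]
            rcases hσ with rfl | rfl <;> norm_num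
          · rw [if_neg hav, if_neg huv]
            simpa using hd v
      obtain ⟨hcard', hDg'⟩ := trail_step ends hne hnd hss hwalk
      have hodd' : ∀ v, ¬ Even (Dg ends (s \ es.toFinset) v) → d' v = 0 := by
        intro v hv
        have hp := wsum_parity hwalk v
        rcases eq_or_ne a v with rfl | hav
        · exfalso
          apply hv
          have heq := hDg' a
          rw [if_pos rfl, if_neg (fun h : u = a => hau h.symm)] at hp
          rw [Int.even_iff] at hodda ⊢
          omega
        · rcases eq_or_ne u v with rfl | huv
          · exfalso
            apply hv
            have heq := hDg' u
            rw [if_neg hav, if_pos rfl] at hp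
            rw [Int.even_iff] at hu ⊢
            omega
          · -- parity of v unchanged
            have hvodd : ¬ Even (Dg ends s v) := by
              intro h
              apply hv
              have heq := hDg' v
              rw [if_neg hav, if_neg huv] at hp
              rw [Int.even_iff] at h ⊢
              omega
            simp only [hd', hval v, if_neg hav, if_neg huv, hodd v hvodd]
            ring
      obtain ⟨f', hf'pm, hf'⟩ := ih (s \ es.toFinset) (by omega) d' hd'le hodd'
      refine ⟨altcolor f' 1 es, altcolor_pm hf'pm es 1 (Or.inl rfl), ?_⟩
      intro v
      rw [Dsum_altcolor ends hnd hss 1 v]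
      have := hf' v
      simp only [hd'] at this
      calc |d v + (1 * altsum ends v es + Dsum ends (s \ es.toFinset) f' v)|
          = |d v + 1 * altsum ends v es + Dsum ends (s \ es.toFinset) f' v| := by ring_nf
        _ ≤ 2 := this

end Stmt5
/-- the edges of any multigraph can be partitioned into two spanning
subgraphs whose degrees at every vertex are within 1 of half the original degree. -/
theorem stmt5 (V E : Type) [Fintype V] [Fintype E] (ends : E → Sym2 V) :
    ∃ F : Set E,
      (∀ v : V, |(mdeg ends F v : ℝ) - (mdeg ends Set.univ v : ℝ) / 2| ≤ 1) ∧
      (∀ v : V, |(mdeg ends Fᶜ v : ℝ) - (mdeg ends Set.univ v : ℝ) / 2| ≤ 1) := by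
  obtain ⟨f, hpm, hbd⟩ := Stmt5.lemMain ends Finset.univ.card Finset.univ le_rfl
    (fun _ => 0) (fun v => by norm_num) (fun v _ => rfl)
  set F : Set E := {e | f e = 1} with hF
  have hfilterF : @Finset.filter E (· ∈ F) (fun a => Classical.propDecidable (a ∈ F))
      Finset.univ = Finset.univ.filter (fun e => f e = 1) := by
    ext e
    simp [hF]
  have hfilterFc : @Finset.filter E (· ∈ Fᶜ) (fun a => Classical.propDecidable (a ∈ Fᶜ))
      Finset.univ = Finset.univ.filter (fun e => ¬ f e = 1) := by
    ext e
    simp [hF]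
  have castF : ∀ v, (mdeg ends F v : ℤ)
      = ∑ e ∈ Finset.univ.filter (fun e => f e = 1), Stmt5.inc ends v e := by
    intro v
    unfold mdeg
    push_cast
    exact Finset.sum_congr hfilterF (fun e _ => rfl)
  have castFc : ∀ v, (mdeg ends Fᶜ v : ℤ)
      = ∑ e ∈ Finset.univ.filter (fun e => ¬ f e = 1), Stmt5.inc ends v e := by
    intro v
    unfold mdeg
    push_cast
    exact Finset.sum_congr hfilterFc (fun e _ => rfl)
  have hU : @Finset.filter E (· ∈ (Set.univ : Set E))
      (fun a => Classical.propDecidable (a ∈ (Set.univ : Set E))) Finset.univ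
      = (Finset.univ : Finset E) := by
    ext e; simp
  have castU : ∀ v, (mdeg ends Set.univ v : ℤ)
      = ∑ e ∈ (Finset.univ : Finset E), Stmt5.inc ends v e := by
    intro v
    unfold mdeg
    push_cast
    exact Finset.sum_congr hU (fun e _ => rfl)
  have key1 : ∀ v, (mdeg ends F v : ℤ) + (mdeg ends Fᶜ v : ℤ) = (mdeg ends Set.univ v : ℤ) := by
    intro v
    rw [castF, castFc, castU]
    exact Finset.sum_filter_add_sum_filter_not Finset.univ _ _
  have key2 : ∀ v, (mdeg ends F v : ℤ) - (mdeg ends Fᶜ v : ℤ)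
      = Stmt5.Dsum ends Finset.univ f v := by
    intro v
    rw [castF, castFc]
    unfold Stmt5.Dsum
    rw [← Finset.sum_filter_add_sum_filter_not Finset.univ (fun e => f e = 1)
      (fun e => f e * Stmt5.inc ends v e)]
    have e1 : ∑ e ∈ Finset.univ.filter (fun e => f e = 1), f e * Stmt5.inc ends v e
        = ∑ e ∈ Finset.univ.filter (fun e => f e = 1), Stmt5.inc ends v e := by
      refine Finset.sum_congr rfl (fun e he => ?_)
      rw [(Finset.mem_filter.mp he).2, one_mul]
    have e2 : ∑ e ∈ Finset.univ.filter (fun e => ¬ f e = 1), f e * Stmt5.inc ends v e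
        = ∑ e ∈ Finset.univ.filter (fun e => ¬ f e = 1), -(Stmt5.inc ends v e) := by
      refine Finset.sum_congr rfl (fun e he => ?_)
      have hne := (Finset.mem_filter.mp he).2
      rcases hpm e with h | h
      · exact absurd h hne
      · rw [h]; ring
    rw [e1, e2, Finset.sum_neg_distrib]
    ring
  have hz : ∀ v, |(mdeg ends F v : ℤ) - (mdeg ends Fᶜ v : ℤ)| ≤ 2 := by
    intro v
    rw [key2 v]
    simpa using hbd v
  refine ⟨F, fun v => ?_, fun v => ?_⟩ <;>
  · have hA : (mdeg ends Set.univ v : ℝ) = (mdeg ends F v : ℝ) + (mdeg ends Fᶜ v : ℝ) := by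
      exact_mod_cast (key1 v).symm
    have hB : |(mdeg ends F v : ℝ) - (mdeg ends Fᶜ v : ℝ)| ≤ 2 := by
      exact_mod_cast hz v
    rw [abs_le] at hB
    rw [hA, abs_le]
    constructor <;> linarith
end

section
/- Let m₁,…,m_k be positive integers with Σ_{i∈[k]} 2^{-m_i} ≤ 1, and let G be a multigraph. Then there exist pairwise edge-disjoint spanning subgraphs G₁,…,G_k of G such that for every i and every vertex v, |deg_{G_i}(v) − 2^{-m_i}·deg_G(v)| ≤ 2. -/
open scoped Classical

namespace Scratch
variable {V : Type}

lemma sym2Count_mk (v a b : V) :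
    sym2Count v s(a,b) = (if a = v then 1 else 0) + (if b = v then 1 else 0) := rfl

/-- degree of a vertex in a multiset of edges -/
noncomputable def mdegM (s : Multiset (Sym2 V)) (v : V) : ℕ := (s.map (sym2Count v)).sum

@[simp] lemma mdegM_zero (v : V) : mdegM (0 : Multiset (Sym2 V)) v = 0 := rfl

@[simp] lemma mdegM_add (s t : Multiset (Sym2 V)) (v : V) :
    mdegM (s + t) v = mdegM s v + mdegM t v := by
  simp [mdegM]

@[simp] lemma mdegM_cons (e : Sym2 V) (s : Multiset (Sym2 V)) (v : V) :
    mdegM (e ::ₘ s) v = sym2Count v e + mdegM s v := by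
  simp [mdegM]

lemma mdegM_erase {e : Sym2 V} {s : Multiset (Sym2 V)} (he : e ∈ s) (v : V) :
    mdegM s v = sym2Count v e + mdegM (s.erase e) v := by
  conv_lhs => rw [← Multiset.cons_erase he]
  simp

lemma mdegM_sub {t s : Multiset (Sym2 V)} (h : t ≤ s) (v : V) :
    mdegM s v = mdegM (s - t) v + mdegM t v := by
  conv_lhs => rw [← tsub_add_cancel_of_le h]
  simp

lemma mdegM_mono {t s : Multiset (Sym2 V)} (h : t ≤ s) (v : V) :
    mdegM t v ≤ mdegM s v := by
  rw [mdegM_sub h]; omega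

lemma mdegM_eq_zero_mem {s : Multiset (Sym2 V)} {v : V} (h : mdegM s v = 0)
    {e : Sym2 V} (he : e ∈ s) : sym2Count v e = 0 := by
  have := Multiset.sum_eq_zero_iff.mp h
  exact this _ (Multiset.mem_map_of_mem _ he)

lemma exists_edge_of_mdegM_pos {s : Multiset (Sym2 V)} {v : V} (h : 0 < mdegM s v) :
    ∃ e ∈ s, sym2Count v e ≠ 0 := by
  by_contra hc
  push_neg at hc
  have : mdegM s v = 0 := by
    apply Multiset.sum_eq_zero_iff.mpr
    intro x hx
    obtain ⟨e, he, rfl⟩ := Multiset.mem_map.mp hx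
    exact hc e he
  omega


def walkEdges : List V → Multiset (Sym2 V)
  | a :: b :: r => s(a,b) ::ₘ walkEdges (b :: r)
  | _ => 0

def walkAlt : Bool → List V → Multiset (Sym2 V)
  | true, a :: b :: r => s(a,b) ::ₘ walkAlt false (b :: r)
  | false, _ :: b :: r => walkAlt true (b :: r)
  | _, _ => 0

@[simp] lemma walkEdges_nil : walkEdges ([] : List V) = 0 := rfl
@[simp] lemma walkEdges_single (a : V) : walkEdges [a] = 0 := rfl
@[simp] lemma walkEdges_cons (a b : V) (r : List V) :
    walkEdges (a :: b :: r) = s(a,b) ::ₘ walkEdges (b :: r) := rfl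
@[simp] lemma walkAlt_nil (c : Bool) : walkAlt c ([] : List V) = 0 := by cases c <;> rfl
@[simp] lemma walkAlt_single (c : Bool) (a : V) : walkAlt c [a] = 0 := by cases c <;> rfl
@[simp] lemma walkAlt_true_cons (a b : V) (r : List V) :
    walkAlt true (a :: b :: r) = s(a,b) ::ₘ walkAlt false (b :: r) := rfl
@[simp] lemma walkAlt_false_cons (a b : V) (r : List V) :
    walkAlt false (a :: b :: r) = walkAlt true (b :: r) := rfl

lemma walkAlt_add : ∀ l : List V, walkAlt true l + walkAlt false l = walkEdges l
  | [] => by simp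
  | [a] => by simp
  | a :: b :: r => by
      have := walkAlt_add (b :: r)
      simp only [walkAlt_true_cons, walkAlt_false_cons, walkEdges_cons]
      rw [Multiset.cons_add, add_comm (walkAlt false (b::r)) (walkAlt true (b::r))] at *
      rw [this]

lemma walkAlt_le (c : Bool) (l : List V) : walkAlt c l ≤ walkEdges l := by
  rw [← walkAlt_add l]
  cases c
  · exact Multiset.le_add_left _ _
  · exact Multiset.le_add_right _ _

/-- deviation of the alternating coloring along a walk: telescoping. -/
lemma walk_dev : ∀ (l : List V) (a v : V),
    2 * (mdegM (walkAlt true (a :: l)) v : ℤ) - (mdegM (walkEdges (a :: l)) v : ℤ) =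
      (if a = v then 1 else 0) +
        (-1 : ℤ) ^ (l.length + 1) *
          (if (a :: l).getLast (List.cons_ne_nil a l) = v then 1 else 0)
  | [], a, v => by simp [List.getLast]; split <;> simp_all
  | c :: r, a, v => by
      have ih := walk_dev r c v
      have hadd : (mdegM (walkAlt true (c :: r)) v : ℤ) + (mdegM (walkAlt false (c :: r)) v : ℤ)
          = (mdegM (walkEdges (c :: r)) v : ℤ) := by
        rw [← walkAlt_add (c :: r)]
        push_cast [mdegM_add]
        ring
      have hlast : (a :: c :: r).getLast (List.cons_ne_nil a (c :: r)) =
          (c :: r).getLast (List.cons_ne_nil c r) := List.getLast_cons _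
      rw [hlast]
      simp only [walkAlt_true_cons, walkEdges_cons, mdegM_cons, List.length_cons]
      push_cast
      have : (mdegM (walkAlt false (c :: r)) v : ℤ) =
          (mdegM (walkEdges (c :: r)) v : ℤ) - (mdegM (walkAlt true (c :: r)) v : ℤ) := by omega
      rw [this]
      rw [show (2:ℤ) * (sym2Count v s(a,c) + ((mdegM (walkEdges (c :: r)) v : ℤ) - (mdegM (walkAlt true (c :: r)) v : ℤ))) - (sym2Count v s(a,c) + (mdegM (walkEdges (c :: r)) v : ℤ))
        = (sym2Count v s(a,c) : ℤ) - (2 * (mdegM (walkAlt true (c :: r)) v : ℤ) - (mdegM (walkEdges (c :: r)) v : ℤ)) by ring]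
      rw [ih, sym2Count_mk]
      push_cast
      rw [show r.length + 1 + 1 = (r.length + 1) + 1 from rfl, pow_succ]
      ring


lemma closed_dev {l : List V} {a : V}
    (hl : (a :: l).getLast (List.cons_ne_nil a l) = a) (v : V) :
    (v ≠ a → 2 * (mdegM (walkAlt true (a :: l)) v : ℤ) = (mdegM (walkEdges (a :: l)) v : ℤ)) ∧
    (2 * (mdegM (walkAlt true (a :: l)) v : ℤ) - (mdegM (walkEdges (a :: l)) v : ℤ) = 0 ∨
     2 * (mdegM (walkAlt true (a :: l)) v : ℤ) - (mdegM (walkEdges (a :: l)) v : ℤ) = 2) := by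
  have h := walk_dev l a v
  rw [hl] at h
  rcases Nat.even_or_odd (l.length + 1) with he | ho
  · rw [he.neg_one_pow] at h
    constructor
    · intro hv; rw [if_neg (fun hh => hv hh.symm)] at h; omega
    · by_cases hav : a = v
      · rw [if_pos hav] at h; omega
      · rw [if_neg hav] at h; omega
  · rw [ho.neg_one_pow] at h
    constructor
    · intro hv; rw [if_neg (fun hh => hv hh.symm)] at h; omega
    · by_cases hav : a = v
      · rw [if_pos hav] at h; omega
      · rw [if_neg hav] at h; omega

lemma closed_even {l : List V} {a : V}
    (hl : (a :: l).getLast (List.cons_ne_nil a l) = a) (v : V) :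
    Even (mdegM (walkEdges (a :: l)) v) := by
  have h := (closed_dev hl v).2
  have : Even ((mdegM (walkEdges (a :: l)) v : ℤ)) := by
    rcases h with h | h
    · exact ⟨mdegM (walkAlt true (a :: l)) v, by omega⟩
    · exact ⟨(mdegM (walkAlt true (a :: l)) v : ℤ) - 1, by omega⟩
  exact_mod_cast this


lemma lemC (n : ℕ) : ∀ (s : Multiset (Sym2 V)) (u x : V), s.card ≤ n →
    (u ≠ x → ¬ Even (mdegM s u)) →
    (∀ v, v ≠ u → v ≠ x → Even (mdegM s v)) →
    ∃ l : List V, (u :: l).getLast (List.cons_ne_nil u l) = x ∧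
      walkEdges (u :: l) ≤ s ∧ mdegM (s - walkEdges (u :: l)) x = 0 := by
  induction n with
  | zero =>
    intro s u x hc h1 h2
    have hs : s = 0 := Multiset.card_eq_zero.mp (Nat.le_zero.mp hc)
    subst hs
    have hux : u = x := by
      by_contra hne
      exact h1 hne (by simp)
    subst hux
    exact ⟨[], by simp, by simp, by simp⟩
  | succ n ih =>
    intro s u x hc h1 h2
    by_cases h0 : mdegM s u = 0
    · have hux : u = x := by
        by_contra hne
        exact h1 hne (by simp [h0])
      subst hux
      refine ⟨[], by simp, by simp, ?_⟩
      simpa using h0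
    · obtain ⟨e, he, hcnt⟩ := exists_edge_of_mdegM_pos (Nat.pos_of_ne_zero h0)
      obtain ⟨⟨a, b⟩, rfl⟩ := Quot.exists_rep e
      have hab : a = u ∨ b = u := by
        by_contra hc'
        push_neg at hc'
        apply hcnt
        show sym2Count u s(a,b) = 0
        rw [sym2Count_mk, if_neg hc'.1, if_neg hc'.2]
      have hex : ∃ w, s(u, w) = s(a, b) := by
        rcases hab with h | h
        · exact ⟨b, by rw [h]⟩
        · exact ⟨a, by rw [h, Sym2.eq_swap]⟩
      obtain ⟨w, hw⟩ := hex
      have he' : s(u, w) ∈ s := by rw [hw]; exact he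
      set s' := s.erase s(u, w) with hs'
      have hdeg : ∀ v, mdegM s v = sym2Count v s(u, w) + mdegM s' v :=
        fun v => mdegM_erase he' v
      have hcard : s'.card ≤ n := by
        rw [hs', Multiset.card_erase_of_mem he', Nat.pred_eq_sub_one]
        have hpos : 0 < s.card := Multiset.card_pos.mpr (fun h => by simp [h] at he')
        omega
      by_cases hwu : w = u
      · subst hwu
        have h1' : w ≠ x → ¬ Even (mdegM s' w) := by
          intro hne hev
          apply h1 hne
          rw [hdeg w, sym2Count_mk, if_pos rfl]
          rcases hev with ⟨p, hp⟩
          exact ⟨p + 1, by omega⟩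
        have h2' : ∀ v, v ≠ w → v ≠ x → Even (mdegM s' v) := by
          intro v hvw hvx
          have := h2 v hvw hvx
          rw [hdeg v, sym2Count_mk, if_neg (fun h => hvw h.symm)] at this
          simpa using this
        obtain ⟨l, hl, hle, hres⟩ := ih s' w x hcard h1' h2'
        refine ⟨w :: l, (List.getLast_cons (List.cons_ne_nil w l)).trans hl, ?_, ?_⟩
        · rw [walkEdges_cons, ← Multiset.cons_erase he']
          exact Multiset.cons_le_cons _ hle
        · rw [walkEdges_cons, Multiset.sub_cons]
          exact hres
      · have cntu : sym2Count u s(u, w) = 1 := by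
          rw [sym2Count_mk, if_pos rfl, if_neg hwu]
        have cntw : sym2Count w s(u, w) = 1 := by
          rw [sym2Count_mk, if_neg (fun h => hwu h.symm), if_pos rfl]
        have h1' : w ≠ x → ¬ Even (mdegM s' w) := by
          intro hne hev
          have h2w := h2 w hwu hne
          rw [hdeg w, cntw] at h2w
          rcases hev with ⟨p, hp⟩
          rcases h2w with ⟨q, hq⟩
          omega
        have h2' : ∀ v, v ≠ w → v ≠ x → Even (mdegM s' v) := by
          intro v hvw hvx
          by_cases hvu : v = u
          · subst hvu
            have := h1 hvx
            rw [hdeg v, cntu] at this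
            rw [Nat.even_iff] at this ⊢
            omega
          · have := h2 v hvu hvx
            rw [hdeg v, sym2Count_mk, if_neg (fun h => hvu h.symm),
              if_neg (fun h => hvw h.symm)] at this
            simpa using this
        obtain ⟨l, hl, hle, hres⟩ := ih s' w x hcard h1' h2'
        refine ⟨w :: l, (List.getLast_cons (List.cons_ne_nil w l)).trans hl, ?_, ?_⟩
        · rw [walkEdges_cons, ← Multiset.cons_erase he']
          exact Multiset.cons_le_cons _ hle
        · rw [walkEdges_cons, Multiset.sub_cons]
          exact hres


lemma lemE (n : ℕ) : ∀ (s : Multiset (Sym2 V)), s.card ≤ n → (∀ v, Even (mdegM s v)) →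
    ∀ R : V → ℤ, (∀ v, |R v| ≤ 2) →
    ∃ t, t ≤ s ∧ ∀ v, |R v + (2 * (mdegM t v : ℤ) - (mdegM s v : ℤ))| ≤ 2 := by
  induction n with
  | zero =>
    intro s hc _ R hR
    have hs : s = 0 := Multiset.card_eq_zero.mp (Nat.le_zero.mp hc)
    subst hs
    exact ⟨0, le_rfl, fun v => by simpa using hR v⟩
  | succ n ih =>
    intro s hc hev R hR
    by_cases hs0 : s = 0
    · subst hs0
      exact ⟨0, le_rfl, fun v => by simpa using hR v⟩
    · obtain ⟨e, he⟩ := Multiset.exists_mem_of_ne_zero hs0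
      obtain ⟨⟨a, b⟩, rfl⟩ := Quot.exists_rep e
      have hcnt : 1 ≤ sym2Count a s(a, b) := by
        rw [sym2Count_mk, if_pos rfl]
        omega
      have hdegpos : 0 < mdegM s a := by
        have h := mdegM_erase (e := s(a, b)) he a
        omega
      obtain ⟨l, hl, hle, hres⟩ := lemC s.card s a a le_rfl
        (fun h => absurd rfl h) (fun v hv _ => hev v)
      set Ed := walkEdges (a :: l) with hEd
      have hEdne : Ed ≠ 0 := by
        intro h
        rw [h, Multiset.sub_zero] at hres
        omega
      set s1 := s - Ed with hs1
      have hsplit : s1 + Ed = s := tsub_add_cancel_of_le hle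
      have hcard1 : s1.card ≤ n := by
        have := congrArg Multiset.card hsplit
        rw [Multiset.card_add] at this
        have hEdpos : 0 < Ed.card := Multiset.card_pos.mpr hEdne
        omega
      have hdegsplit : ∀ v, mdegM s v = mdegM s1 v + mdegM Ed v := mdegM_sub hle
      have hev1 : ∀ v, Even (mdegM s1 v) := by
        intro v
        have h1 := hev v
        have h2 := closed_even hl v
        rw [← hEd] at h2
        rw [Nat.even_iff] at h1 h2 ⊢
        have := hdegsplit v
        omega
      have hfalse : ∀ v, (mdegM (walkAlt true (a :: l)) v) +
          (mdegM (walkAlt false (a :: l)) v) = mdegM Ed v := by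
        intro v
        rw [← mdegM_add, walkAlt_add]
      obtain ⟨t0, ht0le, hdev0, hdeva⟩ :
          ∃ t0, t0 ≤ Ed ∧ (∀ v, v ≠ a → 2 * (mdegM t0 v : ℤ) = (mdegM Ed v : ℤ)) ∧
            |R a + (2 * (mdegM t0 a : ℤ) - (mdegM Ed a : ℤ))| ≤ 2 := by
        have hRa2 := abs_le.mp (hR a)
        by_cases hRa : R a ≤ 0
        · refine ⟨walkAlt true (a :: l), walkAlt_le _ _, ?_, ?_⟩
          · intro v hv
            have h1 := (closed_dev hl v).1 hv
            rw [← hEd] at h1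
            exact h1
          · have h := (closed_dev hl a).2
            rw [← hEd] at h
            rcases h with h | h <;> (rw [abs_le]; omega)
        · refine ⟨walkAlt false (a :: l), walkAlt_le _ _, ?_, ?_⟩
          · intro v hv
            have h1 := (closed_dev hl v).1 hv
            rw [← hEd] at h1
            have h2 := hfalse v
            omega
          · have h := (closed_dev hl a).2
            rw [← hEd] at h
            have h2 := hfalse a
            rw [abs_le]
            rcases h with h | h <;> omega
      set R' : V → ℤ := fun v => R v + (2 * (mdegM t0 v : ℤ) - (mdegM Ed v : ℤ)) with hR'
      have hR'le : ∀ v, |R' v| ≤ 2 := by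
        intro v
        by_cases hv : v = a
        · subst hv; exact hdeva
        · simp only [hR']
          rw [hdev0 v hv]
          simpa using hR v
      obtain ⟨t1, ht1le, ht1⟩ := ih s1 hcard1 hev1 R' hR'le
      refine ⟨t0 + t1, ?_, ?_⟩
      · calc t0 + t1 ≤ Ed + s1 := add_le_add ht0le ht1le
          _ = s := by rw [add_comm, hsplit]
      · intro v
        have heq : R v + (2 * (mdegM (t0 + t1) v : ℤ) - (mdegM s v : ℤ)) =
            R' v + (2 * (mdegM t1 v : ℤ) - (mdegM s1 v : ℤ)) := by
          rw [mdegM_add, hdegsplit v]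
          simp only [hR']
          push_cast
          ring
        rw [heq]
        exact ht1 v


lemma sub_eq_sub_inter {α : Type} (s t : Multiset α) : s - t = s - (s ∩ t) := by
  apply Multiset.ext.mpr
  intro e
  simp only [Multiset.count_sub, Multiset.count_inter]
  omega

lemma pullback {α β : Type} (f : α → β) :
    ∀ (s : Multiset α) (t' : Multiset β), t' ≤ s.map f → ∃ t, t ≤ s ∧ t.map f = t' := by
  intro s
  induction s using Multiset.induction with
  | empty =>
    intro t' h
    rw [Multiset.map_zero] at h
    exact ⟨0, le_rfl, by simp [Multiset.le_zero.mp h]⟩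
  | cons a s ih =>
    intro t' h
    rw [Multiset.map_cons] at h
    by_cases hm : f a ∈ t'
    · have h2 : t'.erase (f a) ≤ Multiset.map f s := by
        have := Multiset.erase_le_erase (f a) h
        rwa [Multiset.erase_cons_head] at this
      obtain ⟨t, hts, htm⟩ := ih _ h2
      refine ⟨a ::ₘ t, Multiset.cons_le_cons _ hts, ?_⟩
      rw [Multiset.map_cons, htm, Multiset.cons_erase hm]
    · have h2 : t' ≤ Multiset.map f s := by
        rw [Multiset.le_iff_count] at h ⊢
        intro b
        have hb' := h b
        by_cases hb : b = f a
        · subst hb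
          simp [Multiset.count_eq_zero_of_notMem hm]
        · rwa [Multiset.count_cons_of_ne hb] at hb'
      obtain ⟨t, hts, htm⟩ := ih _ h2
      exact ⟨t, le_trans hts (Multiset.le_cons_self _ _), htm⟩

lemma cnt_map_some (v : V) (e : Sym2 V) :
    sym2Count (some v) (e.map some) = sym2Count v e := by
  induction e using Sym2.ind with
  | _ a b => simp [sym2Count_mk, Sym2.map_pair_eq]

lemma cnt_map_none (e : Sym2 V) : sym2Count (none : Option V) (e.map some) = 0 := by
  induction e using Sym2.ind with
  | _ a b => simp [sym2Count_mk, Sym2.map_pair_eq]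

lemma mdegM_map_some (s : Multiset (Sym2 V)) (v : V) :
    mdegM (s.map (Sym2.map some)) (some v) = mdegM s v := by
  unfold mdegM
  rw [Multiset.map_map]
  congr 1
  exact Multiset.map_congr rfl (fun e _ => cnt_map_some v e)

lemma mdegM_map_none (s : Multiset (Sym2 V)) :
    mdegM (s.map (Sym2.map some)) (none : Option V) = 0 := by
  unfold mdegM
  rw [Multiset.map_map]
  apply Multiset.sum_eq_zero
  intro x hx
  obtain ⟨e, _, rfl⟩ := Multiset.mem_map.mp hx
  exact cnt_map_none e

set_option maxHeartbeats 1000000 in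
lemma lemH [Fintype V] (s : Multiset (Sym2 V)) :
    ∃ t, t ≤ s ∧ ∀ v, |2 * (mdegM t v : ℤ) - (mdegM s v : ℤ)| ≤ 2 := by
  letI : DecidableEq (Option V) := fun a b => Classical.propDecidable _
  set sh : Multiset (Sym2 (Option V)) := s.map (Sym2.map some) with hsh
  set O : Finset V := Finset.univ.filter (fun v => ¬ Even (mdegM s v)) with hO
  set M : Multiset (Sym2 (Option V)) := O.val.map (fun a => s(some a, none)) with hM
  set T : Multiset (Sym2 (Option V)) := sh + M with hT
  have hMsome : ∀ v : V, mdegM M (some v) = if v ∈ O then 1 else 0 := by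
    intro v
    have : mdegM M (some v) = ∑ a ∈ O, (if a = v then 1 else 0) := by
      unfold mdegM
      rw [hM, Multiset.map_map]
      rw [Finset.sum_eq_multiset_sum]
      congr 1
      apply Multiset.map_congr rfl
      intro a _
      show sym2Count (some v) s(some a, none) = _
      rw [sym2Count_mk]
      simp
    rw [this, Finset.sum_ite_eq' O v (fun _ => 1)]
  have hMnone : ∀ e ∈ M, sym2Count (none : Option V) e = 1 := by
    intro e he
    obtain ⟨a, _, rfl⟩ := Multiset.mem_map.mp he
    rw [sym2Count_mk]
    simp
  have hTsome : ∀ v : V, mdegM T (some v) = mdegM s v + (if v ∈ O then 1 else 0) := by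
    intro v
    rw [hT, mdegM_add, mdegM_map_some, hMsome]
  have hTeven : ∀ w : Option V, w ≠ none → Even (mdegM T w) := by
    intro w hw
    match w with
    | none => exact absurd rfl hw
    | some v =>
      rw [hTsome]
      by_cases hv : v ∈ O
      · have hodd : ¬ Even (mdegM s v) := by
          rw [hO] at hv
          exact (Finset.mem_filter.mp hv).2
        rw [if_pos hv]
        rw [Nat.even_iff] at hodd ⊢
        omega
      · have hev : Even (mdegM s v) := by
          by_contra hc
          exact hv (by rw [hO]; exact Finset.mem_filter.mpr ⟨Finset.mem_univ v, hc⟩)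
        rw [if_neg hv]
        simpa using hev
  obtain ⟨l0, hl0, hle0, hres0⟩ := lemC T.card T none none le_rfl
    (fun h => absurd rfl h) (fun v hv _ => hTeven v hv)
  set E0 := walkEdges (none :: l0) with hE0
  set s1 := T - E0 with hs1
  have hsplitT : ∀ w, mdegM T w = mdegM s1 w + mdegM E0 w := by
    intro w
    rw [hs1]
    exact mdegM_sub hle0 w
  have hs1even : ∀ w, Even (mdegM s1 w) := by
    intro w
    match w with
    | none => rw [hres0]; exact Even.zero
    | some v =>
      have h1 := hTeven (some v) (by simp)
      have h2 := closed_even hl0 (some v)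
      rw [← hE0] at h2
      have h3 := hsplitT (some v)
      rw [Nat.even_iff] at h1 h2 ⊢
      omega
  have hMle : M ≤ E0 := by
    rw [Multiset.le_iff_count]
    intro e
    by_cases hm : e ∈ M
    · have hcnt1 := hMnone e hm
      have hes1 : Multiset.count e s1 = 0 := by
        by_contra hc
        have hmem : e ∈ s1 := Multiset.count_pos.mp (Nat.pos_of_ne_zero hc)
        have := mdegM_eq_zero_mem hres0 hmem
        omega
      have hc1 : Multiset.count e s1 = Multiset.count e T - Multiset.count e E0 := by
        rw [hs1, Multiset.count_sub]
      have hc2 : Multiset.count e T = Multiset.count e sh + Multiset.count e M := by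
        rw [hT, Multiset.count_add]
      have hc3 : Multiset.count e E0 ≤ Multiset.count e T :=
        Multiset.le_iff_count.mp hle0 e
      omega
    · rw [Multiset.count_eq_zero_of_notMem hm]
      omega
  set t0 := walkAlt true (none :: l0) with ht0
  have ht0E : t0 ≤ E0 := walkAlt_le true (none :: l0)
  have hdev0 : ∀ v : V, 2 * (mdegM t0 (some v) : ℤ) = (mdegM E0 (some v) : ℤ) := by
    intro v
    have := (closed_dev hl0 (some v)).1 (by simp)
    rwa [← hE0, ← ht0] at this
  set R : Option V → ℤ := fun w =>
    match w with
    | none => 0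
    | some v => (mdegM M (some v) : ℤ) - 2 * (mdegM (t0 ∩ M) (some v) : ℤ) with hR
  have hRle : ∀ w, |R w| ≤ 2 := by
    intro w
    match w with
    | none => simp [hR]
    | some v =>
      have h1 : mdegM M (some v) ≤ 1 := by
        rw [hMsome]; split <;> omega
      have h2 : mdegM (t0 ∩ M) (some v) ≤ mdegM M (some v) :=
        mdegM_mono (Multiset.inter_le_right : t0 ∩ M ≤ M) (some v)
      simp only [hR]
      rw [abs_le]
      omega
  obtain ⟨t1, ht1le, ht1⟩ := lemE s1.card s1 le_rfl hs1even R hRle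
  set th := (t0 - M) + t1 with hth
  have hthle : th ≤ sh := by
    rw [Multiset.le_iff_count]
    intro e
    have c1 : Multiset.count e t0 ≤ Multiset.count e E0 := Multiset.le_iff_count.mp ht0E e
    have c2 : Multiset.count e M ≤ Multiset.count e E0 := Multiset.le_iff_count.mp hMle e
    have c3 : Multiset.count e t1 ≤ Multiset.count e s1 := Multiset.le_iff_count.mp ht1le e
    have c4 : Multiset.count e s1 = Multiset.count e T - Multiset.count e E0 := by
      rw [hs1, Multiset.count_sub]
    have c5 : Multiset.count e T = Multiset.count e sh + Multiset.count e M := by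
      rw [hT, Multiset.count_add]
    have c6 : Multiset.count e E0 ≤ Multiset.count e T := Multiset.le_iff_count.mp hle0 e
    have c7 : Multiset.count e th = (Multiset.count e t0 - Multiset.count e M) +
        Multiset.count e t1 := by
      rw [hth, Multiset.count_add, Multiset.count_sub]
    omega
  have hdev : ∀ v : V, |2 * (mdegM th (some v) : ℤ) - (mdegM sh (some v) : ℤ)| ≤ 2 := by
    intro v
    have e1 := hsplitT (some v)
    have e2 : mdegM T (some v) = mdegM sh (some v) + mdegM M (some v) := by
      rw [hT, mdegM_add]
    have e3 : mdegM th (some v) = mdegM (t0 - M) (some v) + mdegM t1 (some v) := by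
      rw [hth, mdegM_add]
    have e4 : mdegM t0 (some v) = mdegM (t0 - M) (some v) + mdegM (t0 ∩ M) (some v) := by
      conv_lhs => rw [← Multiset.sub_add_inter t0 M]
      rw [mdegM_add]
    have e5 := hdev0 v
    have e6 := ht1 (some v)
    simp only [hR] at e6
    rw [abs_le] at e6 ⊢
    omega
  obtain ⟨t, htle, htmap⟩ := pullback (Sym2.map some) s th (by rwa [← hsh])
  refine ⟨t, htle, ?_⟩
  intro v
  have h1 : mdegM t v = mdegM th (some v) := by
    rw [← htmap, mdegM_map_some]
  have h2 : mdegM s v = mdegM sh (some v) := by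
    rw [hsh, mdegM_map_some]
  rw [h1, h2]
  exact hdev v


section Sets
variable {E : Type} [Fintype E]

noncomputable def muS (ends : E → Sym2 V) (F : Set E) : Multiset (Sym2 V) :=
  (Finset.univ.filter (· ∈ F)).val.map ends

lemma muS_def (ends : E → Sym2 V) (F : Set E) :
    muS ends F = (Finset.univ.filter (· ∈ F)).val.map ends := rfl

lemma mdeg_eq (ends : E → Sym2 V) (F : Set E) (v : V) :
    mdeg ends F v = mdegM (muS ends F) v := by
  unfold mdeg mdegM muS
  rw [Multiset.map_map, Finset.sum_eq_multiset_sum]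
  rfl

lemma lemHS [Fintype V] (ends : E → Sym2 V) (F : Set E) :
    ∃ A : Set E, A ⊆ F ∧
      ∀ v, |2 * (mdeg ends A v : ℤ) - (mdeg ends F v : ℤ)| ≤ 2 := by
  obtain ⟨t, htle, hdev⟩ := lemH (muS ends F)
  rw [muS_def] at htle
  obtain ⟨t', ht'le, ht'map⟩ := pullback ends (Finset.univ.filter (· ∈ F)).val t htle
  have hnodup : t'.Nodup := Multiset.nodup_of_le ht'le (Finset.univ.filter (· ∈ F)).nodup
  set B : Finset E := ⟨t', hnodup⟩ with hB
  refine ⟨(B : Set E), ?_, ?_⟩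
  · intro e he
    have he' : e ∈ t' := by
      rwa [Finset.mem_coe, hB] at he
    have := Multiset.mem_of_le ht'le he'
    exact (Finset.mem_filter.mp this).2
  · have hmu : muS ends (B : Set E) = t := by
      rw [muS_def, ← ht'map]
      congr 1
      show _ = B.val
      apply congrArg Finset.val
      apply Finset.ext
      intro e
      simp
    intro v
    rw [mdeg_eq ends _ v, mdeg_eq ends F v, hmu]
    exact hdev v

lemma mdeg_diff (ends : E → Sym2 V) {A F : Set E} (h : A ⊆ F) (v : V) :
    mdeg ends (F \ A) v + mdeg ends A v = mdeg ends F v := by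
  unfold mdeg
  rw [← Finset.sum_filter_add_sum_filter_not (Finset.univ.filter (· ∈ F)) (fun e => e ∉ A)]
  congr 1
  · apply Finset.sum_congr _ (fun _ _ => rfl)
    apply Finset.ext
    intro e
    simp only [Finset.mem_filter, Finset.mem_univ, true_and, Set.mem_diff]
  · apply Finset.sum_congr _ (fun _ _ => rfl)
    apply Finset.ext
    intro e
    simp only [Finset.mem_filter, Finset.mem_univ, true_and, not_not]
    exact ⟨fun he => ⟨h he, he⟩, fun he => he.2⟩

end Sets

lemma pow2_dvd_of_le {a b : ℕ} (h : 2 ^ a ≤ 2 ^ b) : 2 ^ a ∣ 2 ^ b :=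
  pow_dvd_pow 2 ((Nat.pow_le_pow_iff_right (by norm_num)).mp h)

lemma dya : ∀ (n : ℕ) {ι : Type} (s : Finset ι) (w : ι → ℕ) (P : ℕ), s.card ≤ n →
    (∃ j, P = 2 ^ j) → (∀ i ∈ s, ∃ j, w i = 2 ^ j) → (∀ i ∈ s, w i ≤ P) →
    (∑ i ∈ s, w i ≤ 2 * P) →
    ∃ u, u ⊆ s ∧ (∑ i ∈ u, w i ≤ P) ∧ (∑ i ∈ s, w i ≤ P + ∑ i ∈ u, w i) := by
  intro n
  induction n with
  | zero =>
    intro ι s w P hc _ _ _ _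
    have hs : s = ∅ := Finset.card_eq_zero.mp (Nat.le_zero.mp hc)
    subst hs
    exact ⟨∅, Finset.Subset.refl _, by simp, by simp⟩
  | succ n ih =>
    intro ι s w P hc hP hpow hle hsum
    rcases Finset.eq_empty_or_nonempty s with rfl | hne
    · exact ⟨∅, Finset.Subset.refl _, by simp, by simp⟩
    · obtain ⟨i0, hi0, hmin⟩ := Finset.exists_min_image s w hne
      set s' := s.erase i0 with hs'
      have hcard' : s'.card ≤ n := by
        rw [hs', Finset.card_erase_of_mem hi0]
        have : 0 < s.card := Finset.card_pos.mpr hne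
        omega
      have hsplit : ∑ i ∈ s', w i + w i0 = ∑ i ∈ s, w i := Finset.sum_erase_add s w hi0
      have hmems : ∀ i ∈ s', i ∈ s := fun i hi => Finset.mem_of_mem_erase hi
      have hpos : 0 < w i0 := by
        obtain ⟨a, ha⟩ := hpow i0 hi0
        rw [ha]
        exact pow_pos (by norm_num) a
      obtain ⟨u', hu'sub, hu'le, hu'ge⟩ := ih s' w P hcard'
        hP (fun i hi => hpow i (hmems i hi)) (fun i hi => hle i (hmems i hi)) (by omega)
      have hu's : u' ⊆ s := fun i hi => hmems i (hu'sub hi)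
      have hi0u' : i0 ∉ u' := fun h => (Finset.notMem_erase i0 s) (hu'sub h)
      by_cases h1 : ∑ i ∈ u', w i + w i0 ≤ P
      · refine ⟨insert i0 u', Finset.insert_subset_iff.mpr ⟨hi0, hu's⟩, ?_, ?_⟩
        · rw [Finset.sum_insert hi0u']
          omega
        · rw [Finset.sum_insert hi0u']
          omega
      · by_cases h2 : ∑ i ∈ s', w i + w i0 ≤ P + ∑ i ∈ u', w i
        · exact ⟨u', hu's, hu'le, by omega⟩
        · exfalso
          have hx : ∀ i ∈ s', w i0 ∣ w i := by
            intro i hi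
            obtain ⟨a, ha⟩ := hpow i0 hi0
            obtain ⟨b, hb⟩ := hpow i (hmems i hi)
            rw [ha, hb]
            apply pow2_dvd_of_le
            rw [← ha, ← hb]
            exact hmin i (hmems i hi)
          have hdvd_u : w i0 ∣ ∑ i ∈ u', w i :=
            Finset.dvd_sum (fun i hi => hx i (hu'sub hi))
          have hdvd_s : w i0 ∣ ∑ i ∈ s', w i :=
            Finset.dvd_sum (fun i hi => hx i hi)
          have hdvd_P : w i0 ∣ P := by
            obtain ⟨a, ha⟩ := hpow i0 hi0
            obtain ⟨b, hb⟩ := hP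
            rw [ha, hb]
            apply pow2_dvd_of_le
            rw [← ha, ← hb]
            exact hle i0 hi0
          have hUP : P ≤ ∑ i ∈ u', w i := by
            obtain ⟨q, hq⟩ := hdvd_u
            obtain ⟨p, hp⟩ := hdvd_P
            by_contra hc'
            push_neg at hc'
            have hqp : q < p := by
              rw [hq, hp] at hc'
              exact lt_of_mul_lt_mul_left hc' (Nat.zero_le _)
            have : q + 1 ≤ p := hqp
            have h3 : w i0 * (q + 1) ≤ w i0 * p := Nat.mul_le_mul_left _ this
            rw [Nat.mul_add, mul_one, ← hq, ← hp] at h3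
            omega
          have hsub_le : ∑ i ∈ u', w i ≤ ∑ i ∈ s', w i :=
            Finset.sum_le_sum_of_subset hu'sub
          have hdvd_d : w i0 ∣ (∑ i ∈ s', w i - ∑ i ∈ u', w i) :=
            Nat.dvd_sub hdvd_s hdvd_u
          have hDP : P ≤ ∑ i ∈ s', w i - ∑ i ∈ u', w i := by
            obtain ⟨q, hq⟩ := hdvd_d
            obtain ⟨p, hp⟩ := hdvd_P
            by_contra hc'
            push_neg at hc'
            have hqp : q < p := by
              rw [hq, hp] at hc'
              exact lt_of_mul_lt_mul_left hc' (Nat.zero_le _)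
            have : q + 1 ≤ p := hqp
            have h3 : w i0 * (q + 1) ≤ w i0 * p := Nat.mul_le_mul_left _ this
            rw [Nat.mul_add, mul_one, ← hq, ← hp] at h3
            omega
          omega


lemma splitHalf {ι : Type} [Fintype ι] (m : ι → ℕ) (hm : ∀ i, 1 ≤ m i)
    (hsum : ∑ i, ((2:ℝ) ^ (m i))⁻¹ ≤ 1) :
    ∃ b : ι → Bool, ∀ β : Bool,
      ∑ i ∈ Finset.univ.filter (fun i => b i = β), ((2:ℝ) ^ (m i - 1))⁻¹ ≤ 1 := by
  classical
  set N := Finset.univ.sup m + 1 with hN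
  have hmN : ∀ i, m i ≤ N := fun i => by
    have := Finset.le_sup (f := m) (Finset.mem_univ i)
    omega
  have hN1 : 1 ≤ N := by omega
  set w : ι → ℕ := fun i => 2 ^ (N - m i) with hw
  have h2N : ((2:ℝ) ^ N) ≠ 0 := pow_ne_zero _ (by norm_num)
  have h2N1 : ((2:ℝ) ^ (N - 1)) ≠ 0 := pow_ne_zero _ (by norm_num)
  have hwr : ∀ i, (w i : ℝ) = (2:ℝ) ^ (N - m i) := by
    intro i
    rw [hw]
    push_cast
    ring
  have hpow2 : ∀ i, ((2:ℝ) ^ (m i))⁻¹ = (w i : ℝ) * ((2:ℝ) ^ N)⁻¹ := by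
    intro i
    have h2m : ((2:ℝ) ^ (m i)) ≠ 0 := pow_ne_zero _ (by norm_num)
    rw [hwr]
    field_simp
    rw [← pow_add]
    congr 1
    have := hmN i
    omega
  have hpow2' : ∀ i, ((2:ℝ) ^ (m i - 1))⁻¹ = (w i : ℝ) * ((2:ℝ) ^ (N - 1))⁻¹ := by
    intro i
    have h2m : ((2:ℝ) ^ (m i - 1)) ≠ 0 := pow_ne_zero _ (by norm_num)
    rw [hwr]
    field_simp
    rw [← pow_add]
    congr 1
    have h1 := hmN i
    have h2 := hm i
    omega
  have hsumN : ∑ i, w i ≤ 2 * 2 ^ (N - 1) := by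
    have hr : (∑ i, (w i : ℝ)) ≤ (2:ℝ) ^ N := by
      have : ∑ i, (w i : ℝ) = ((2:ℝ) ^ N) * ∑ i, ((2:ℝ) ^ (m i))⁻¹ := by
        rw [Finset.mul_sum]
        apply Finset.sum_congr rfl
        intro i _
        rw [hpow2 i]
        field_simp
      rw [this]
      calc ((2:ℝ) ^ N) * ∑ i, ((2:ℝ) ^ (m i))⁻¹ ≤ ((2:ℝ) ^ N) * 1 :=
            mul_le_mul_of_nonneg_left hsum (by positivity)
        _ = (2:ℝ) ^ N := mul_one _
    have h2 : ((2:ℝ) ^ N) = ((2 * 2 ^ (N - 1) : ℕ) : ℝ) := by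
      conv_lhs => rw [show N = N - 1 + 1 from by omega]
      rw [pow_succ']
      push_cast
      ring
    rw [h2] at hr
    exact_mod_cast (by push_cast at hr ⊢; exact hr : ((∑ i, w i : ℕ) : ℝ) ≤ ((2 * 2 ^ (N - 1) : ℕ) : ℝ))
  obtain ⟨u, husub, hule, huge⟩ := dya Finset.univ.card Finset.univ w (2 ^ (N - 1))
    le_rfl ⟨N - 1, rfl⟩ (fun i _ => ⟨N - m i, rfl⟩)
    (fun i _ => Nat.pow_le_pow_right (by norm_num) (by have := hm i; have := hmN i; omega))
    hsumN
  have key : ∀ (v : Finset ι), (∑ i ∈ v, w i ≤ 2 ^ (N - 1)) →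
      ∑ i ∈ v, ((2:ℝ) ^ (m i - 1))⁻¹ ≤ 1 := by
    intro v hv
    have : ∑ i ∈ v, ((2:ℝ) ^ (m i - 1))⁻¹ = (∑ i ∈ v, (w i : ℝ)) * ((2:ℝ) ^ (N - 1))⁻¹ := by
      rw [Finset.sum_mul]
      exact Finset.sum_congr rfl (fun i _ => hpow2' i)
    rw [this]
    have hvr : (∑ i ∈ v, (w i : ℝ)) ≤ (2:ℝ) ^ (N - 1) := by
      have : ((∑ i ∈ v, w i : ℕ) : ℝ) ≤ ((2 ^ (N - 1) : ℕ) : ℝ) := by exact_mod_cast hv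
      push_cast at this
      exact this
    calc (∑ i ∈ v, (w i : ℝ)) * ((2:ℝ) ^ (N - 1))⁻¹ ≤
        ((2:ℝ) ^ (N - 1)) * ((2:ℝ) ^ (N - 1))⁻¹ := by
          apply mul_le_mul_of_nonneg_right hvr (by positivity)
      _ = 1 := mul_inv_cancel₀ h2N1
  refine ⟨fun i => decide (i ∈ u), ?_⟩
  intro β
  cases β
  · -- false : complement
    have hfilter : Finset.univ.filter (fun i => decide (i ∈ u) = false) = Finset.univ \ u := by
      apply Finset.ext
      intro i
      simp
    rw [hfilter]
    apply key
    have hsd : ∑ i ∈ Finset.univ \ u, w i + ∑ i ∈ u, w i = ∑ i, w i :=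
      Finset.sum_sdiff husub
    omega
  · have hfilter : Finset.univ.filter (fun i => decide (i ∈ u) = true) = u := by
      apply Finset.ext
      intro i
      simp
    rw [hfilter]
    exact key u hule


lemma devstep {q dG dS dF : ℝ} (hq : 0 ≤ q) (h1 : |dG - q * dS| ≤ 2 - 2 * q)
    (h2 : |dS - dF / 2| ≤ 1) : |dG - (q / 2) * dF| ≤ 2 - 2 * (q / 2) := by
  have heq : dG - (q / 2) * dF = (dG - q * dS) + q * (dS - dF / 2) := by ring
  rw [heq]
  calc |(dG - q * dS) + q * (dS - dF / 2)| ≤ |dG - q * dS| + |q * (dS - dF / 2)| :=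
        abs_add_le _ _
    _ ≤ (2 - 2 * q) + q * 1 := by
        have h3 : |q * (dS - dF / 2)| = q * |dS - dF / 2| := by
          rw [abs_mul, abs_of_nonneg hq]
        have h4 := mul_le_mul_of_nonneg_left h2 hq
        rw [h3]
        linarith
    _ ≤ 2 - 2 * (q / 2) := by linarith

lemma sum_inv_pair_le {ι : Type} [Fintype ι] (m : ι → ℕ)
    (hsum : ∑ i, ((2:ℝ) ^ (m i))⁻¹ ≤ 1) {i j : ι} (hij : i ≠ j) :
    ((2:ℝ) ^ (m i))⁻¹ + ((2:ℝ) ^ (m j))⁻¹ ≤ 1 := by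
  classical
  have hsub : ({i, j} : Finset ι) ⊆ Finset.univ := Finset.subset_univ _
  have h := Finset.sum_le_sum_of_subset_of_nonneg hsub
    (fun k _ _ => by positivity : ∀ k ∈ Finset.univ, k ∉ ({i, j} : Finset ι) →
      0 ≤ ((2:ℝ) ^ (m k))⁻¹)
  rw [Finset.sum_pair hij] at h
  linarith

lemma rec1 {E : Type} [Fintype E] [Fintype V] (ends : E → Sym2 V) :
    ∀ (n : ℕ) (ι : Type) [Fintype ι] (m : ι → ℕ), (∀ i, m i ≤ n) →
    (∑ i, ((2:ℝ) ^ (m i))⁻¹ ≤ 1) → ∀ F : Set E,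
    ∃ G : ι → Set E, (∀ i, G i ⊆ F) ∧ (Pairwise fun i j => Disjoint (G i) (G j)) ∧
      ∀ i v, |(mdeg ends (G i) v : ℝ) - ((2:ℝ) ^ (m i))⁻¹ * (mdeg ends F v : ℝ)| ≤
        2 - 2 * ((2:ℝ) ^ (m i))⁻¹ := by
  intro n
  induction n with
  | zero =>
    intro ι _ m hmn hsum F
    refine ⟨fun _ => F, fun _ => le_rfl, ?_, ?_⟩
    · intro i j hij
      exfalso
      have h := sum_inv_pair_le m hsum hij
      have h0i : m i = 0 := Nat.le_zero.mp (hmn i)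
      have h0j : m j = 0 := Nat.le_zero.mp (hmn j)
      rw [h0i, h0j] at h
      norm_num at h
    · intro i v
      have h0 : m i = 0 := Nat.le_zero.mp (hmn i)
      rw [h0]
      simp
  | succ n ih =>
    intro ι _ m hmn hsum F
    by_cases hz : ∃ i0, m i0 = 0
    · obtain ⟨i0, hi0⟩ := hz
      have huniq : ∀ j : ι, j = i0 := by
        intro j
        by_contra hne
        have h := sum_inv_pair_le m hsum hne
        rw [hi0] at h
        simp only [pow_zero, inv_one] at h
        have : (0:ℝ) < ((2:ℝ) ^ (m j))⁻¹ := by positivity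
        linarith
      have hall0 : ∀ i, m i = 0 := fun i => by rw [huniq i]; exact hi0
      refine ⟨fun _ => F, fun _ => le_rfl, ?_, ?_⟩
      · intro i j hij
        exact absurd ((huniq i).trans (huniq j).symm) hij
      · intro i v
        rw [hall0 i]
        simp
    · push_neg at hz
      have hm1 : ∀ i, 1 ≤ m i := fun i => Nat.one_le_iff_ne_zero.mpr (hz i)
      obtain ⟨b, hb⟩ := splitHalf m hm1 hsum
      obtain ⟨A, hAF, hAdev⟩ := lemHS ends F
      have hAr : ∀ v, |(mdeg ends A v : ℝ) - (mdeg ends F v : ℝ) / 2| ≤ 1 := by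
        intro v
        have h := hAdev v
        have h' : |2 * (mdeg ends A v : ℝ) - (mdeg ends F v : ℝ)| ≤ 2 := by
          exact_mod_cast h
        rw [abs_le] at h' ⊢
        constructor <;> [linarith; linarith]
      have hDr : ∀ v, |(mdeg ends (F \ A) v : ℝ) - (mdeg ends F v : ℝ) / 2| ≤ 1 := by
        intro v
        have hd := mdeg_diff ends hAF v
        have hd' : (mdeg ends (F \ A) v : ℝ) + (mdeg ends A v : ℝ) =
            (mdeg ends F v : ℝ) := by exact_mod_cast hd
        have h := hAr v
        rw [abs_le] at h ⊢
        constructor <;> [linarith; linarith]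
      -- true side
      have hsumT : ∑ i : {x : ι // b x = true}, ((2:ℝ) ^ (m i.1 - 1))⁻¹ ≤ 1 := by
        rw [← Finset.sum_subtype (Finset.univ.filter (fun i => b i = true))
          (fun x => by simp) (fun i => ((2:ℝ) ^ (m i - 1))⁻¹)]
        exact hb true
      have hsumF : ∑ i : {x : ι // b x = false}, ((2:ℝ) ^ (m i.1 - 1))⁻¹ ≤ 1 := by
        rw [← Finset.sum_subtype (Finset.univ.filter (fun i => b i = false))
          (fun x => by simp) (fun i => ((2:ℝ) ^ (m i - 1))⁻¹)]
        exact hb false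
      obtain ⟨Gt, hGtF, hGtD, hGtdev⟩ := ih {x : ι // b x = true}
        (fun i => m i.1 - 1) (fun i => by show m i.1 - 1 ≤ n; have := hmn i.1; omega) hsumT A
      obtain ⟨Gf, hGfF, hGfD, hGfdev⟩ := ih {x : ι // b x = false}
        (fun i => m i.1 - 1) (fun i => by show m i.1 - 1 ≤ n; have := hmn i.1; omega) hsumF (F \ A)
      refine ⟨fun i => if h : b i = true then Gt ⟨i, h⟩ else Gf ⟨i, by simpa using h⟩,
        ?_, ?_, ?_⟩
      · intro i
        by_cases hbi : b i = true
        · simp only [dif_pos hbi]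
          exact (hGtF _).trans hAF
        · simp only [dif_neg hbi]
          exact (hGfF _).trans Set.diff_subset
      · intro i j hij
        by_cases hbi : b i = true <;> by_cases hbj : b j = true
        · simp only [dif_pos hbi, dif_pos hbj]
          exact hGtD (fun h => hij (congrArg Subtype.val h))
        · simp only [dif_pos hbi, dif_neg hbj]
          exact Disjoint.mono (hGtF _) (hGfF _) Set.disjoint_sdiff_right
        · simp only [dif_neg hbi, dif_pos hbj]
          exact Disjoint.mono (hGfF _) (hGtF _) Set.disjoint_sdiff_right.symm
        · simp only [dif_neg hbi, dif_neg hbj]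
          exact hGfD (fun h => hij (congrArg Subtype.val h))
      · intro i v
        have hq2 : ((2:ℝ) ^ (m i))⁻¹ = ((2:ℝ) ^ (m i - 1))⁻¹ / 2 := by
          have hpow : (2:ℝ) ^ (m i) = (2:ℝ) ^ (m i - 1) * 2 := by
            conv_lhs => rw [show m i = (m i - 1) + 1 from by (have := hm1 i; omega)]
            rw [pow_succ]
          rw [hpow, mul_inv]
          ring
        have hqnn : (0:ℝ) ≤ ((2:ℝ) ^ (m i - 1))⁻¹ := by positivity
        by_cases hbi : b i = true
        · simp only [dif_pos hbi]
          have h1 := hGtdev ⟨i, hbi⟩ v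
          rw [hq2]
          exact devstep hqnn h1 (hAr v)
        · simp only [dif_neg hbi]
          have h1 := hGfdev ⟨i, by simpa using hbi⟩ v
          rw [hq2]
          exact devstep hqnn h1 (hDr v)

end Scratch


/-- given positive integers `m₁,…,m_k` with `Σ 2^{-mᵢ} ≤ 1`, every
multigraph has pairwise edge-disjoint spanning subgraphs `G₁,…,G_k` where `Gᵢ`
is a `2^{-mᵢ}`-fraction: every degree is within 2 of the corresponding fraction
of the original degree. -/
theorem stmt6 (k : ℕ) (m : Fin k → ℕ) (hm : ∀ i, 0 < m i)
    (hsum : ∑ i, ((2 : ℝ) ^ (m i))⁻¹ ≤ 1)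
    (V E : Type) [Fintype V] [Fintype E] (ends : E → Sym2 V) :
    ∃ F : Fin k → Set E,
      (Pairwise fun i j => Disjoint (F i) (F j)) ∧
      ∀ i, ∀ v : V,
        |(mdeg ends (F i) v : ℝ) -
          ((2 : ℝ) ^ (m i))⁻¹ * (mdeg ends Set.univ v : ℝ)| ≤ 2 := by
  obtain ⟨G, _, hdisj, hdev⟩ := Scratch.rec1 ends (Finset.univ.sup m) (Fin k) m
    (fun i => Finset.le_sup (Finset.mem_univ i)) hsum Set.univ
  refine ⟨G, hdisj, ?_⟩
  intro i v
  have h := hdev i v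
  have hq : (0:ℝ) ≤ ((2:ℝ) ^ (m i))⁻¹ := by positivity
  linarith
end

section
/- Let G be a hypergraph with hyperedges of size at most three, and let τ(G) be the multigraph obtained from G by replacing each hyperedge h of size three containing vertices u₁, u₂, u₃ by a new vertex v_h adjacent to u₁, u₂ and u₃ (with multiplicities). Then for every pair of original vertices u, v of G, the local edge-connectivity satisfies λ_G(u,v) = λ_{τ(G)}(u,v). -/
open scoped Classical

/-- The local edge-connectivity `λ_H(x,y)`: the least size of a set of hyperedges
whose deletion separates `x` from `y`. -/
noncomputable def lamH {V E : Type} (edges : E → Multiset V) (x y : V) : ℕ :=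
  sInf {n | ∃ D : Set E, Nat.card D = n ∧
    ¬ Relation.ReflTransGen (HAdj edges {e | e ∉ D}) x y}

/-- The multigraph `τ(G)`: each size-three hyperedge `h = {u₁,u₂,u₃}` is replaced
by a new vertex `v_h` joined to `u₁`, `u₂`, `u₃` (with multiplicities); hyperedges
of size at most two are kept. -/
noncomputable def tauEdges {V E : Type} (edges : E → Multiset V) :
    ({e : E // (edges e).card ≤ 2} ⊕ {e : E // (edges e).card = 3} × Fin 3) →
      Multiset (V ⊕ {e : E // (edges e).card = 3})
  | Sum.inl e => (edges e.1).map Sum.inl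
  | Sum.inr (e, i) =>
      {Sum.inr e,
        Sum.inl ((edges e.1).toList.get
          (Fin.cast (by rw [Multiset.length_toList, e.2]) i))}

/- ------------------ auxiliary material ------------------- -/

section Aux

variable {V E : Type}

/-- The underlying hyperedge of an edge of `τ(G)`. -/
def phiTau (edges : E → Multiset V) :
    ({e : E // (edges e).card ≤ 2} ⊕ {e : E // (edges e).card = 3} × Fin 3) → E
  | Sum.inl e => e.1
  | Sum.inr (e, _) => e.1

/-- The `i`-th vertex of a size-3 hyperedge. -/
noncomputable def vtx (edges : E → Multiset V) (e : {e : E // (edges e).card = 3})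
    (i : Fin 3) : V :=
  (edges e.1).toList.get (Fin.cast (by rw [Multiset.length_toList, e.2]) i)

lemma tauEdges_inr (edges : E → Multiset V) (e : {e : E // (edges e).card = 3})
    (i : Fin 3) :
    tauEdges edges (Sum.inr (e, i)) = {Sum.inr e, Sum.inl (vtx edges e i)} := rfl

lemma vtx_mem (edges : E → Multiset V) (e : {e : E // (edges e).card = 3}) (i : Fin 3) :
    vtx edges e i ∈ edges e.1 := by
  rw [← Multiset.mem_toList]
  unfold vtx
  simp only [List.get_eq_getElem]
  exact List.getElem_mem _

lemma exists_vtx (edges : E → Multiset V) (e : {e : E // (edges e).card = 3}) {x : V}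
    (hx : x ∈ edges e.1) : ∃ i : Fin 3, vtx edges e i = x := by
  rw [← Multiset.mem_toList] at hx
  obtain ⟨n, hn⟩ := List.mem_iff_get.1 hx
  have hlen : (edges e.1).toList.length = 3 := by
    rw [Multiset.length_toList, e.2]
  refine ⟨⟨n.1, by omega⟩, ?_⟩
  unfold vtx
  rw [← hn]
  exact congrArg _ (Fin.ext rfl)

lemma countP_sing {α : Type} (P : α → Prop) (c : α) :
    Multiset.countP P ({c} : Multiset α) = if P c then 1 else 0 := by
  rw [show ({c} : Multiset α) = c ::ₘ 0 from rfl, Multiset.countP_cons,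
    Multiset.countP_zero]
  omega

lemma countP_disj_le {α : Type} (P Q : α → Prop) (h : ∀ a, ¬ (P a ∧ Q a))
    (s : Multiset α) :
    Multiset.countP P s + Multiset.countP Q s ≤ Multiset.card s := by
  induction s using Multiset.induction with
  | empty => simp
  | cons a s ih =>
    rw [Multiset.countP_cons, Multiset.countP_cons, Multiset.card_cons]
    by_cases h1 : P a <;> by_cases h2 : Q a
    · exact absurd ⟨h1, h2⟩ (h a)
    all_goals simp [h1, h2]; omega

lemma vtx_count (edges : E → Multiset V) (e : {e : E // (edges e).card = 3})
    (P : V → Prop) (i j : Fin 3) (hij : i ≠ j) (hi : P (vtx edges e i))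
    (hj : P (vtx edges e j)) : 2 ≤ Multiset.countP P (edges e.1) := by
  have hlen : (edges e.1).toList.length = 3 := by
    rw [Multiset.length_toList, e.2]
  obtain ⟨a, b, c, habc⟩ := List.length_eq_three.1 hlen
  have hcoe : (edges e.1) = ↑([a, b, c]) := by
    rw [← habc, Multiset.coe_toList]
  have hv : ∀ k : Fin 3, vtx edges e k = [a, b, c].get (Fin.cast (by simp) k) := by
    intro k
    unfold vtx
    simp only [List.get_eq_getElem]
    exact List.getElem_of_eq habc _
  rw [hcoe, show ((↑[a, b, c] : Multiset V) = a ::ₘ b ::ₘ c ::ₘ 0) from rfl]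
  rw [hv i] at hi
  rw [hv j] at hj
  fin_cases i <;> fin_cases j <;>
    simp_all [Multiset.countP_cons, countP_sing] <;> omega

end Aux

lemma sInf_eq_of_dom {A B : Set ℕ} (h1 : ∀ n ∈ A, ∃ m ∈ B, m ≤ n)
    (h2 : ∀ n ∈ B, ∃ m ∈ A, m ≤ n) : sInf A = sInf B := by
  rcases A.eq_empty_or_nonempty with hA | hA
  · rcases B.eq_empty_or_nonempty with hB | hB
    · rw [hA, hB]
    · obtain ⟨n, hn⟩ := hB
      obtain ⟨m, hm, _⟩ := h2 n hn
      rw [hA] at hm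
      exact absurd hm (Set.notMem_empty m)
  · have hA' := Nat.sInf_mem hA
    obtain ⟨m, hmB, hm⟩ := h1 _ hA'
    have hB : B.Nonempty := ⟨m, hmB⟩
    have hB' := Nat.sInf_mem hB
    obtain ⟨m', hm'A, hm'⟩ := h2 _ hB'
    exact le_antisymm ((Nat.sInf_le hm'A).trans hm') ((Nat.sInf_le hmB).trans hm)

section Main

variable {V E : Type}

/-- Lifting a path of `G` avoiding the projection of `D'` to a path in `τ(G)`
avoiding `D'`. -/
lemma lift_path (edges : E → Multiset V) (hsize : ∀ e, (edges e).card ≤ 3)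
    (D' : Set ({e : E // (edges e).card ≤ 2} ⊕ {e : E // (edges e).card = 3} × Fin 3))
    {u v : V}
    (h : Relation.ReflTransGen (HAdj edges {e | e ∉ phiTau edges '' D'}) u v) :
    Relation.ReflTransGen (HAdj (tauEdges edges) {t | t ∉ D'})
      (Sum.inl u) (Sum.inl v) := by
  induction h with
  | refl => exact .refl
  | @tail b c _ hbc ih =>
    obtain ⟨e, he, hb, hc⟩ := hbc
    simp only [Set.mem_setOf_eq] at he
    by_cases h2 : (edges e).card ≤ 2
    · refine ih.tail ⟨Sum.inl ⟨e, h2⟩, ?_, ?_, ?_⟩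
      · intro hmem
        exact he ⟨_, hmem, rfl⟩
      · show _ ∈ tauEdges edges (Sum.inl ⟨e, h2⟩)
        exact Multiset.mem_map_of_mem _ hb
      · show _ ∈ tauEdges edges (Sum.inl ⟨e, h2⟩)
        exact Multiset.mem_map_of_mem _ hc
    · have h3 : (edges e).card = 3 := le_antisymm (hsize e) (by omega)
      obtain ⟨i, hi⟩ := exists_vtx edges ⟨e, h3⟩ hb
      obtain ⟨j, hj⟩ := exists_vtx edges ⟨e, h3⟩ hc
      have hstep1 : HAdj (tauEdges edges) {t | t ∉ D'} (Sum.inl b) (Sum.inr ⟨e, h3⟩) :=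
        ⟨Sum.inr (⟨e, h3⟩, i), fun hmem => he ⟨_, hmem, rfl⟩, by
          rw [tauEdges_inr, hi]; simp, by rw [tauEdges_inr]; simp⟩
      have hstep2 : HAdj (tauEdges edges) {t | t ∉ D'} (Sum.inr ⟨e, h3⟩) (Sum.inl c) :=
        ⟨Sum.inr (⟨e, h3⟩, j), fun hmem => he ⟨_, hmem, rfl⟩, by
          rw [tauEdges_inr]; simp, by rw [tauEdges_inr, hj]; simp⟩
      exact (ih.tail hstep1).tail hstep2

/-- Transferring a cut of `G` to a cut of `τ(G)` of size at most as large. -/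
lemma cut_transfer [Fintype V] [Fintype E] (edges : E → Multiset V)
    (u v : V) (D : Set E)
    (hcut : ¬ Relation.ReflTransGen (HAdj edges {e | e ∉ D}) u v) :
    ∃ D' : Set ({e : E // (edges e).card ≤ 2} ⊕ {e : E // (edges e).card = 3} × Fin 3),
      Nat.card D' ≤ Nat.card D ∧
      ¬ Relation.ReflTransGen (HAdj (tauEdges edges) {t | t ∉ D'})
        (Sum.inl u) (Sum.inl v) := by
  classical
  set S : Set V := {x | Relation.ReflTransGen (HAdj edges {e | e ∉ D}) u x} with hSdef
  have hstep : ∀ e ∉ D, ∀ a ∈ edges e, a ∈ S → ∀ b ∈ edges e, b ∈ S :=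
    fun e he a ha haS b hb => haS.tail ⟨e, he, ha, hb⟩
  set side : Set (V ⊕ {e : E // (edges e).card = 3}) :=
    {x | Sum.elim (· ∈ S) (fun e => 2 ≤ Multiset.countP (· ∈ S) (edges e.1)) x}
    with hsidedef
  set D' : Set ({e : E // (edges e).card ≤ 2} ⊕ {e : E // (edges e).card = 3} × Fin 3) :=
    {t | (∃ x ∈ tauEdges edges t, x ∈ side) ∧ ∃ x ∈ tauEdges edges t, x ∉ side}
    with hD'def
  -- if a 3-edge is not in D, all its vertices and its new vertex are on the same side
  have hsame : ∀ (e : {e : E // (edges e).card = 3}), e.1 ∉ D →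
      ∀ i : Fin 3, (vtx edges e i ∈ S ↔ Sum.inr e ∈ side) := by
    intro e he i
    constructor
    · intro hw
      have hall : ∀ b ∈ edges e.1, b ∈ S := hstep e.1 he _ (vtx_mem edges e i) hw
      have : Multiset.countP (· ∈ S) (edges e.1) = (edges e.1).card :=
        Multiset.countP_eq_card.2 hall
      show 2 ≤ _
      rw [this, e.2]; omega
    · intro hside
      have h2 : 2 ≤ Multiset.countP (· ∈ S) (edges e.1) := hside
      have hpos : 0 < Multiset.countP (· ∈ S) (edges e.1) := by omega
      obtain ⟨a, ha, haS⟩ := Multiset.countP_pos.1 hpos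
      exact hstep e.1 he a ha haS _ (vtx_mem edges e i)
  -- the projection of D' lands in D
  have hsub : ∀ t ∈ D', phiTau edges t ∈ D := by
    rintro t ⟨⟨x, hxt, hxs⟩, ⟨y, hyt, hys⟩⟩
    by_contra he
    match t with
    | Sum.inl e =>
      simp only [phiTau] at he
      have hx' : ∃ a ∈ edges e.1, x = Sum.inl a := by
        obtain ⟨a, ha, rfl⟩ := Multiset.mem_map.1 hxt
        exact ⟨a, ha, rfl⟩
      obtain ⟨a, ha, rfl⟩ := hx'
      obtain ⟨b, hb, rfl⟩ := Multiset.mem_map.1 hyt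
      exact hys (hstep e.1 he a ha hxs b hb)
    | Sum.inr (e, i) =>
      simp only [phiTau] at he
      rw [tauEdges_inr] at hxt hyt
      have hmemx : x = Sum.inr e ∨ x = Sum.inl (vtx edges e i) := by
        simpa using hxt
      have hmemy : y = Sum.inr e ∨ y = Sum.inl (vtx edges e i) := by
        simpa using hyt
      have hiff : (Sum.inl (vtx edges e i) ∈ side) ↔ (Sum.inr e ∈ side) :=
        hsame e he i
      rcases hmemx with rfl | rfl <;> rcases hmemy with rfl | rfl <;>
        simp_all
  -- the projection is injective on D'
  have hinj : Set.InjOn (phiTau edges) D' := by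
    rintro t1 ht1 t2 ht2 heq
    match t1, t2 with
    | Sum.inl e1, Sum.inl e2 =>
      simp only [phiTau] at heq
      exact congrArg Sum.inl (Subtype.ext heq)
    | Sum.inl e1, Sum.inr (e2, j) =>
      simp only [phiTau] at heq
      exact absurd (heq ▸ e2.2) (by have := e1.2; omega)
    | Sum.inr (e1, i), Sum.inl e2 =>
      simp only [phiTau] at heq
      exact absurd (heq ▸ e2.2) (by have := e1.2; omega)
    | Sum.inr (e1, i), Sum.inr (e2, j) =>
      simp only [phiTau] at heq
      have he : e1 = e2 := Subtype.ext heq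
      subst he
      -- extract crossing information
      have hcross : ∀ k : Fin 3, Sum.inr (e1, k) ∈ D' →
          ((Sum.inr e1 ∈ side ∧ vtx edges e1 k ∉ S) ∨
           (Sum.inr e1 ∉ side ∧ vtx edges e1 k ∈ S)) := by
        rintro k ⟨⟨x, hxt, hxs⟩, ⟨y, hyt, hys⟩⟩
        rw [tauEdges_inr] at hxt hyt
        have hmemx : x = Sum.inr e1 ∨ x = Sum.inl (vtx edges e1 k) := by simpa using hxt
        have hmemy : y = Sum.inr e1 ∨ y = Sum.inl (vtx edges e1 k) := by simpa using hyt
        by_cases hr : Sum.inr e1 ∈ side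
        · left
          refine ⟨hr, ?_⟩
          rcases hmemy with rfl | rfl
          · exact absurd hr hys
          · exact hys
        · right
          refine ⟨hr, ?_⟩
          rcases hmemx with rfl | rfl
          · exact absurd hxs hr
          · exact hxs
      rcases hcross i ht1 with ⟨hr, hi⟩ | ⟨hr, hi⟩ <;>
        rcases hcross j ht2 with ⟨hr', hj⟩ | ⟨hr', hj⟩
      · by_contra hne
        have hne' : i ≠ j := fun h => hne (by rw [h])
        have h2 := vtx_count edges e1 (· ∉ S) i j hne' hi hj
        have hfilt := countP_disj_le (· ∈ S) (· ∉ S) (fun a ha => ha.2 ha.1) (edges e1.1)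
        have hr2 : 2 ≤ Multiset.countP (· ∈ S) (edges e1.1) := hr
        rw [e1.2] at hfilt
        omega
      · exact absurd hr hr'
      · exact absurd hr' hr
      · by_contra hne
        have hne' : i ≠ j := fun h => hne (by rw [h])
        have h2 := vtx_count edges e1 (· ∈ S) i j hne' hi hj
        exact hr h2
  refine ⟨D', ?_, ?_⟩
  · -- cardinality bound
    have h1 : Nat.card D' = D'.ncard := (Nat.card_coe_set_eq _)
    have h2 : Nat.card D = D.ncard := (Nat.card_coe_set_eq _)
    rw [h1, h2, ← Set.ncard_image_of_injOn hinj]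
    exact Set.ncard_le_ncard (Set.image_subset_iff.2 hsub) D.toFinite
  · -- D' is a cut
    intro hreach
    have hsideu : (Sum.inl u : V ⊕ {e : E // (edges e).card = 3}) ∈ side :=
      Relation.ReflTransGen.refl
    have inv : ∀ y, Relation.ReflTransGen (HAdj (tauEdges edges) {t | t ∉ D'})
        (Sum.inl u) y → y ∈ side := by
      intro y h
      induction h with
      | refl => exact hsideu
      | tail _ hadj ih =>
        obtain ⟨t, ht, hxt, hyt⟩ := hadj
        by_contra hy
        exact ht ⟨⟨_, hxt, ih⟩, ⟨_, hyt, hy⟩⟩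
    exact hcut (inv _ hreach)

end Main

/-- for every hypergraph `G` with hyperedges of size at most three and
every pair of original vertices `u, v`, the local edge-connectivity in `G` equals
that in the multigraph `τ(G)`. -/
theorem stmt9 (V E : Type) [Fintype V] [Fintype E] (edges : E → Multiset V)
    (hne : ∀ e, edges e ≠ 0) (hsize : ∀ e, (edges e).card ≤ 3) :
    ∀ u v : V,
      lamH edges u v = lamH (tauEdges edges) (Sum.inl u) (Sum.inl v) := by
  intro u v
  unfold lamH
  apply sInf_eq_of_dom
  · rintro n ⟨D, hcard, hcut⟩
    obtain ⟨D', hle, hcut'⟩ := cut_transfer edges u v D hcut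
    exact ⟨Nat.card D', ⟨D', rfl, hcut'⟩, hcard ▸ hle⟩
  · rintro n ⟨D', hcard, hcut'⟩
    refine ⟨Nat.card (phiTau edges '' D' : Set E), ⟨phiTau edges '' D', rfl, ?_⟩, ?_⟩
    · intro hreach
      exact hcut' (lift_path edges hsize D' hreach)
    · rw [← hcard, Nat.card_coe_set_eq, Nat.card_coe_set_eq]
      exact Set.ncard_image_le D'.toFinite
end

section
/- Let G be a 2k-edge-connected multigraph without loops on at least two vertices, and let (A,B) be a maximum cut of G (a bipartition maximizing the number of crossing edges). Then the bipartite multigraph G' obtained from G by deleting all edges with both endpoints in A or both in B is k-edge-connected, and deg_{G'}(v) ≥ deg_G(v)/2 for every vertex v. -/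
open scoped Classical

/-- The whole multigraph is connected when restricted to the edges in `F`. -/
def MGConn {V E : Type} (ends : E → Sym2 V) (F : Set E) : Prop :=
  ∀ u v : V, Relation.ReflTransGen (MGAdj ends F) u v

/-- The spanning subgraph with edge set `F` is `k`-edge-connected. -/
def MGEdgeConnSub {V E : Type} (ends : E → Sym2 V) (F : Set E) (k : ℕ) : Prop :=
  ∀ D : Set E, Nat.card D < k → MGConn ends (F \ D)

/-- `e` crosses the cut `(A, Aᶜ)`. -/
def crosses {V E : Type} (ends : E → Sym2 V) (A : Set V) (e : E) : Prop :=
  (∃ x ∈ ends e, x ∈ A) ∧ (∃ y ∈ ends e, y ∉ A)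

/-- The size of the cut `(A, Aᶜ)`. -/
noncomputable def cutSize {V E : Type} [Fintype E] (ends : E → Sym2 V)
    (A : Set V) : ℕ :=
  Nat.card {e : E // crosses ends A e}

/-- The degree of `v` in the spanning subgraph with edge set `F` (no loops here). -/
noncomputable def mdegF {V E : Type} [Fintype E] (ends : E → Sym2 V)
    (F : Set E) (v : V) : ℕ :=
  Nat.card {e : E // e ∈ F ∧ v ∈ ends e}

lemma crosses_iff {V E : Type} (ends : E → Sym2 V) (A : Set V) (e : E)
    (x y : V) (h : ends e = s(x,y)) :
    crosses ends A e ↔ ((x ∈ A ∧ y ∉ A) ∨ (y ∈ A ∧ x ∉ A)) := by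
  unfold crosses
  rw [h]
  constructor
  · rintro ⟨⟨a, ha, haA⟩, ⟨b, hb, hbA⟩⟩
    rw [Sym2.mem_iff] at ha hb
    rcases ha with rfl | rfl <;> rcases hb with rfl | rfl <;> tauto
  · rintro (⟨h1, h2⟩ | ⟨h1, h2⟩)
    · exact ⟨⟨x, by simp, h1⟩, ⟨y, by simp, h2⟩⟩
    · exact ⟨⟨y, by simp, h1⟩, ⟨x, by simp, h2⟩⟩

lemma crosses_symmDiff {V E : Type} (ends : E → Sym2 V) (A S : Set V) (e : E) :
    crosses ends (symmDiff A S) e ↔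
      ((crosses ends A e ∧ ¬ crosses ends S e) ∨ (¬ crosses ends A e ∧ crosses ends S e)) := by
  obtain ⟨x, y, h⟩ : ∃ x y, ends e = s(x,y) := ⟨(ends e).out.1, (ends e).out.2, (Quot.out_eq _).symm⟩
  rw [crosses_iff ends _ e x y h, crosses_iff ends A e x y h, crosses_iff ends S e x y h,
    Set.mem_symmDiff, Set.mem_symmDiff]
  tauto

lemma natCard_congr {E : Type} [Fintype E] (p q : E → Prop) (h : ∀ e, p e ↔ q e) :
    Nat.card {e // p e} = Nat.card {e // q e} :=
  Nat.card_congr (Equiv.subtypeEquivRight h)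

lemma natCard_split {E : Type} [Fintype E] (p q : E → Prop) :
    Nat.card {e // p e} = Nat.card {e // p e ∧ q e} + Nat.card {e // p e ∧ ¬ q e} := by
  have hf : ∀ r : E → Prop, Nat.card {e // r e} = (Finset.univ.filter r).card := by
    intro r; simp [Nat.card_eq_fintype_card, Fintype.card_subtype]
  rw [hf, hf, hf]
  have h := Finset.card_filter_add_card_filter_not
    (s := Finset.univ.filter p) (p := q)
  rw [Finset.filter_filter, Finset.filter_filter] at h
  exact h.symm.trans (by congr!)

/-- The key max-cut exchange inequality: for any `S`, the number of non-crossing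
edges leaving `S` is at most the number of crossing edges leaving `S`. -/
lemma count_le {V E : Type} [Fintype E] (ends : E → Sym2 V)
    (A : Set V) (hmax : ∀ A' : Set V, cutSize ends A' ≤ cutSize ends A) (S : Set V) :
    Nat.card {e : E // ¬ crosses ends A e ∧ crosses ends S e} ≤
      Nat.card {e : E // crosses ends A e ∧ crosses ends S e} := by
  have h1 : cutSize ends (symmDiff A S) =
      Nat.card {e : E // crosses ends A e ∧ ¬ crosses ends S e}
        + Nat.card {e : E // ¬ crosses ends A e ∧ crosses ends S e} := by
    rw [cutSize, natCard_congr _ _ (crosses_symmDiff ends A S),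
      natCard_split _ (crosses ends A)]
    congr 1
    · exact natCard_congr _ _ (fun e => by tauto)
    · exact natCard_congr _ _ (fun e => by tauto)
  have h2 : cutSize ends A =
      Nat.card {e : E // crosses ends A e ∧ ¬ crosses ends S e}
        + Nat.card {e : E // crosses ends A e ∧ crosses ends S e} := by
    rw [cutSize, natCard_split _ (crosses ends S), Nat.add_comm]
  have := hmax (symmDiff A S)
  omega

/-- if `G` is a loopless `2k`-edge-connected multigraph on at least
two vertices and `(A, Aᶜ)` is a maximum cut, then the bipartite multigraph `G'`
consisting of the crossing edges is `k`-edge-connected and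
`deg_{G'}(v) ≥ deg_G(v)/2` for every vertex. -/
theorem stmt11 (k : ℕ) (V E : Type) [Fintype V] [Fintype E] (ends : E → Sym2 V)
    (hV : 2 ≤ Fintype.card V)
    (hloop : ∀ e, ¬ (ends e).IsDiag)
    (hconn : MGEdgeConnSub ends Set.univ (2 * k))
    (A : Set V) (hmax : ∀ A' : Set V, cutSize ends A' ≤ cutSize ends A) :
    MGEdgeConnSub ends {e | crosses ends A e} k ∧
      ∀ v : V, mdegF ends Set.univ v ≤ 2 * mdegF ends {e | crosses ends A e} v := by
  -- for loopless edges, `v ∈ ends e ↔ crosses ends {v} e`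
  have hmem : ∀ (v : V) (e : E), v ∈ ends e ↔ crosses ends {v} e := by
    intro v e
    obtain ⟨x, y, h⟩ : ∃ x y, ends e = s(x,y) := ⟨(ends e).out.1, (ends e).out.2, (Quot.out_eq _).symm⟩
    have hxy : x ≠ y := by
      intro hc; exact hloop e (by rw [h, Sym2.mk_isDiag_iff]; exact hc)
    rw [crosses_iff ends _ e x y h, h, Sym2.mem_iff]
    simp only [Set.mem_singleton_iff]
    constructor
    · rintro (rfl | rfl)
      · exact Or.inl ⟨rfl, fun hy => hxy hy.symm⟩
      · exact Or.inr ⟨rfl, fun hx => hxy hx⟩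
    · rintro (⟨rfl, -⟩ | ⟨rfl, -⟩) <;> simp
  constructor
  · -- k-edge-connectivity of the crossing edges
    intro D hD u v
    by_contra hv
    -- the set of vertices reachable from u
    set S : Set V := {w | Relation.ReflTransGen (MGAdj ends ({e | crosses ends A e} \ D)) u w}
      with hS
    have huS : u ∈ S := Relation.ReflTransGen.refl
    have hvS : v ∉ S := hv
    -- every crossing edge leaving S belongs to D
    have hsub : {e : E | crosses ends A e ∧ crosses ends S e} ⊆ D := by
      intro e ⟨heA, heS⟩
      by_contra heD
      obtain ⟨a, b, h⟩ : ∃ x y, ends e = s(x,y) := ⟨(ends e).out.1, (ends e).out.2, (Quot.out_eq _).symm⟩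
      rw [crosses_iff ends S e a b h] at heS
      rcases heS with ⟨haS, hbS⟩ | ⟨hbS, haS⟩
      · exact hbS (Relation.ReflTransGen.tail haS ⟨e, ⟨heA, heD⟩, h⟩)
      · exact haS (Relation.ReflTransGen.tail hbS ⟨e, ⟨heA, heD⟩, by rw [h, Sym2.eq_swap]⟩)
    have hc1 : Nat.card {e : E | crosses ends A e ∧ crosses ends S e} < k :=
      lt_of_le_of_lt (Nat.card_mono (Set.toFinite D) hsub) hD
    have hc2 : Nat.card {e : E | ¬ crosses ends A e ∧ crosses ends S e} < k :=
      lt_of_le_of_lt (count_le ends A hmax S) hc1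
    -- so fewer than 2k edges leave S; contradiction with 2k-edge-connectivity
    have hcut : Nat.card {e : E | crosses ends S e} < 2 * k := by
      have heq : Nat.card {e : E // crosses ends S e} =
          Nat.card {e : E // crosses ends A e ∧ crosses ends S e}
            + Nat.card {e : E // ¬ crosses ends A e ∧ crosses ends S e} := by
        rw [natCard_split _ (crosses ends A)]
        congr 1
        · exact natCard_congr _ _ (fun e => by tauto)
        · exact natCard_congr _ _ (fun e => by tauto)
      have e1 : Nat.card {e : E | crosses ends S e} =
          Nat.card {e : E // crosses ends S e} := rfl
      have e2 : Nat.card {e : E | crosses ends A e ∧ crosses ends S e} =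
          Nat.card {e : E // crosses ends A e ∧ crosses ends S e} := rfl
      have e3 : Nat.card {e : E | ¬ crosses ends A e ∧ crosses ends S e} =
          Nat.card {e : E // ¬ crosses ends A e ∧ crosses ends S e} := rfl
      omega
    have hreach := hconn {e | crosses ends S e} hcut u v
    -- but a walk avoiding edges leaving S cannot leave S
    have : v ∈ S := by
      clear hv hvS
      induction hreach with
      | refl => exact huS
      | tail _ hbc ih =>
        obtain ⟨e, ⟨-, heS⟩, he⟩ := hbc
        by_contra hc
        exact heS ⟨⟨_, by rw [he]; simp, ih⟩, ⟨_, by rw [he]; simp, hc⟩⟩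
    exact hvS this
  · -- degree condition
    intro v
    have h1 : mdegF ends Set.univ v =
        Nat.card {e : E // crosses ends A e ∧ crosses ends {v} e}
          + Nat.card {e : E // ¬ crosses ends A e ∧ crosses ends {v} e} := by
      rw [mdegF, natCard_congr _ _ (fun e : E => show (e ∈ Set.univ ∧ v ∈ ends e) ↔
          crosses ends {v} e by simp [hmem v e]),
        natCard_split _ (crosses ends A)]
      congr 1
      · exact natCard_congr _ _ (fun e => by tauto)
      · exact natCard_congr _ _ (fun e => by tauto)
    have h2 : mdegF ends {e | crosses ends A e} v =
        Nat.card {e : E // crosses ends A e ∧ crosses ends {v} e} := by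
      rw [mdegF]
      exact natCard_congr _ _ (fun e => by
        simp only [Set.mem_setOf_eq, hmem v e])
    have h3 := count_le ends A hmax {v}
    omega
end

section
/- Let A = {A₁,…,A_n} be events in a probability space, and for each A ∈ A let Γ(A) ⊆ A be such that A is independent of the collection A ∖ ({A} ∪ Γ(A)). If there is an assignment x : A → (0,1) with Pr(A) ≤ x(A)·Π_{B∈Γ(A)}(1−x(B)) for every A ∈ A, then Pr(⋀_{A∈A} ¬A) ≥ Π_{A∈A}(1−x(A)) > 0. -/
open MeasureTheory

noncomputable def pC {n : ℕ} {Ω : Type} [MeasurableSpace Ω] (μ : Measure Ω)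
    (A : Fin n → Set Ω) (T : Finset (Fin n)) : ℝ :=
  (μ (⋂ j ∈ T, (A j)ᶜ)).toReal

lemma pC_nonneg {n : ℕ} {Ω : Type} [MeasurableSpace Ω] (μ : Measure Ω)
    (A : Fin n → Set Ω) (T : Finset (Fin n)) : 0 ≤ pC μ A T :=
  ENNReal.toReal_nonneg

lemma pC_empty {n : ℕ} {Ω : Type} [MeasurableSpace Ω] (μ : Measure Ω)
    [IsProbabilityMeasure μ] (A : Fin n → Set Ω) : pC μ A ∅ = 1 := by
  simp [pC]

lemma pC_insert {n : ℕ} {Ω : Type} [MeasurableSpace Ω] (μ : Measure Ω)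
    [IsProbabilityMeasure μ] (A : Fin n → Set Ω) (hA : ∀ i, MeasurableSet (A i))
    (k : Fin n) (T : Finset (Fin n)) :
    pC μ A (insert k T) = pC μ A T - (μ (A k ∩ ⋂ j ∈ T, (A j)ᶜ)).toReal := by
  have h := measure_inter_add_diff (μ := μ) (s := ⋂ j ∈ T, (A j)ᶜ) (hA k)
  have hd : (⋂ j ∈ T, (A j)ᶜ) \ A k = ⋂ j ∈ insert k T, (A j)ᶜ := by
    rw [Finset.set_biInter_insert, Set.diff_eq, Set.inter_comm]
  rw [Set.inter_comm] at h
  rw [hd] at h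
  have h1 : μ (A k ∩ ⋂ j ∈ T, (A j)ᶜ) ≠ ⊤ := measure_ne_top _ _
  have h2 : μ (⋂ j ∈ insert k T, (A j)ᶜ) ≠ ⊤ := measure_ne_top _ _
  unfold pC
  rw [← h, ENNReal.toReal_add h1 h2]
  ring

lemma peel {n : ℕ} {Ω : Type} [MeasurableSpace Ω] (μ : Measure Ω)
    [IsProbabilityMeasure μ] (A : Fin n → Set Ω) (hA : ∀ i, MeasurableSet (A i))
    (x : Fin n → ℝ) (hx : ∀ i, x i ∈ Set.Ioo (0 : ℝ) 1) (m : ℕ)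
    (ahyp : ∀ T : Finset (Fin n), T.card ≤ m → ∀ i,
      (μ (A i ∩ ⋂ j ∈ T, (A j)ᶜ)).toReal ≤ x i * pC μ A T) :
    ∀ S₁ S₂ : Finset (Fin n), (S₁ ∪ S₂).card ≤ m + 1 →
      (∏ j ∈ S₁, (1 - x j)) * pC μ A S₂ ≤ pC μ A (S₁ ∪ S₂) := by
  intro S₁
  induction S₁ using Finset.induction_on with
  | empty => intro S₂ _; simp
  | @insert k S₁' hk ih =>
    intro S₂ hcard
    rw [Finset.insert_union] at hcard ⊢
    rw [Finset.prod_insert hk]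
    have hxk := hx k
    have hprodnn : 0 ≤ ∏ j ∈ S₁', (1 - x j) :=
      Finset.prod_nonneg fun j _ => by linarith [(hx j).2]
    have hrest : 0 ≤ (∏ j ∈ S₁', (1 - x j)) * pC μ A S₂ :=
      mul_nonneg hprodnn (pC_nonneg μ A S₂)
    by_cases hkm : k ∈ S₁' ∪ S₂
    · rw [Finset.insert_eq_self.mpr hkm] at hcard ⊢
      have hih := ih S₂ hcard
      nlinarith [hxk.1, hxk.2]
    · have hc2 : (S₁' ∪ S₂).card ≤ m := by
        rw [Finset.card_insert_of_notMem hkm] at hcard; omega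
      have hins := pC_insert μ A hA k (S₁' ∪ S₂)
      have ha := ahyp (S₁' ∪ S₂) hc2 k
      have hih := ih S₂ (hc2.trans (Nat.le_succ m))
      have hpnn := pC_nonneg μ A (S₁' ∪ S₂)
      nlinarith [hxk.1, hxk.2]

lemma claim {n : ℕ} {Ω : Type} [MeasurableSpace Ω] (μ : Measure Ω)
    [IsProbabilityMeasure μ] (A : Fin n → Set Ω) (hA : ∀ i, MeasurableSet (A i))
    (Γ : Fin n → Finset (Fin n))
    (hindep : ∀ i : Fin n, ∀ S : Finset (Fin n),
      (∀ j ∈ S, j ≠ i ∧ j ∉ Γ i) → ∀ f : Fin n → Bool,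
        μ (A i ∩ ⋂ j ∈ S, (if f j then A j else (A j)ᶜ)) =
          μ (A i) * μ (⋂ j ∈ S, (if f j then A j else (A j)ᶜ)))
    (x : Fin n → ℝ) (hx : ∀ i, x i ∈ Set.Ioo (0 : ℝ) 1)
    (hbound : ∀ i, (μ (A i)).toReal ≤ x i * ∏ j ∈ Γ i, (1 - x j)) :
    ∀ m : ℕ, ∀ S : Finset (Fin n), S.card ≤ m → ∀ i,
      (μ (A i ∩ ⋂ j ∈ S, (A j)ᶜ)).toReal ≤ x i * pC μ A S := by
  intro m
  induction m with
  | zero =>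
    intro S hS i
    have hSe : S = ∅ := Finset.card_eq_zero.mp (Nat.le_zero.mp hS)
    subst hSe
    rw [pC_empty]
    have h1 : ∏ j ∈ Γ i, (1 - x j) ≤ 1 :=
      Finset.prod_le_one (fun j _ => by linarith [(hx j).2])
        (fun j _ => by linarith [(hx j).1])
    have hb := hbound i
    have hxi := hx i
    simp only [Finset.notMem_empty, Set.iInter_of_empty, Set.iInter_univ,
      Set.inter_univ]
    nlinarith [mul_le_mul_of_nonneg_left h1 hxi.1.le]
  | succ m ih =>
    intro S hS i
    by_cases hiS : i ∈ S
    · have hempty : A i ∩ ⋂ j ∈ S, (A j)ᶜ = ∅ := by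
        apply Set.eq_empty_of_subset_empty
        rintro w ⟨hw1, hw2⟩
        exact (Set.mem_iInter₂.mp hw2 i hiS) hw1
      rw [hempty]
      simp only [measure_empty, ENNReal.toReal_zero]
      exact mul_nonneg (hx i).1.le (pC_nonneg μ A S)
    · set S₁ := S ∩ Γ i with hS₁
      set S₂ := S \ Γ i with hS₂
      have hS12 : S₁ ∪ S₂ = S := by
        rw [Finset.union_comm]; exact Finset.sdiff_union_inter S (Γ i)
      have hS₂S : S₂ ⊆ S := Finset.sdiff_subset
      have hind := hindep i S₂
        (fun j hj => ⟨fun hji => hiS (hji ▸ (hS₂S hj)), (Finset.mem_sdiff.mp hj).2⟩)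
        (fun _ => false)
      simp only [Bool.false_eq_true, if_false] at hind
      have step1 : (μ (A i ∩ ⋂ j ∈ S, (A j)ᶜ)).toReal
          ≤ (μ (A i ∩ ⋂ j ∈ S₂, (A j)ᶜ)).toReal := by
        apply ENNReal.toReal_mono (measure_ne_top _ _)
        apply measure_mono
        apply Set.inter_subset_inter_right
        exact Set.biInter_subset_biInter_left (fun j hj => hS₂S hj)
      have step2 : (μ (A i ∩ ⋂ j ∈ S₂, (A j)ᶜ)).toReal
          = (μ (A i)).toReal * pC μ A S₂ := by
        rw [hind, ENNReal.toReal_mul]; rfl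
      have hprodΓ : ∏ j ∈ Γ i, (1 - x j) ≤ ∏ j ∈ S₁, (1 - x j) := by
        have hsub : S₁ ⊆ Γ i := Finset.inter_subset_right
        have := Finset.prod_sdiff (f := fun j => (1 - x j)) hsub
        have h1 : ∏ j ∈ Γ i \ S₁, (1 - x j) ≤ 1 :=
          Finset.prod_le_one (fun j _ => by linarith [(hx j).2])
            (fun j _ => by linarith [(hx j).1])
        have h2 : 0 ≤ ∏ j ∈ S₁, (1 - x j) :=
          Finset.prod_nonneg fun j _ => by linarith [(hx j).2]
        nlinarith
      have hpeel := peel μ A hA x hx m ih S₁ S₂ (by rw [hS12]; exact hS)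
      rw [hS12] at hpeel
      have hb := hbound i
      have hxi := hx i
      have hp2 := pC_nonneg μ A S₂
      calc (μ (A i ∩ ⋂ j ∈ S, (A j)ᶜ)).toReal
          ≤ (μ (A i)).toReal * pC μ A S₂ := step1.trans step2.le
        _ ≤ (x i * ∏ j ∈ Γ i, (1 - x j)) * pC μ A S₂ :=
            mul_le_mul_of_nonneg_right hb hp2
        _ ≤ (x i * ∏ j ∈ S₁, (1 - x j)) * pC μ A S₂ := by
            apply mul_le_mul_of_nonneg_right _ hp2
            exact mul_le_mul_of_nonneg_left hprodΓ hxi.1.le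
        _ = x i * ((∏ j ∈ S₁, (1 - x j)) * pC μ A S₂) := by ring
        _ ≤ x i * pC μ A S := mul_le_mul_of_nonneg_left hpeel hxi.1.le

/-- asymmetric Lovász Local Lemma: if each event `A i` is mutually
independent of all events outside `{i} ∪ Γ i`, and there are reals
`x i ∈ (0,1)` with `Pr(A i) ≤ x i · Π_{j ∈ Γ i} (1 - x j)`, then the probability
that none of the events occurs is at least `Π i (1 - x i) > 0`. -/
theorem stmt16 (n : ℕ) (Ω : Type) [MeasurableSpace Ω] (μ : Measure Ω)
    [IsProbabilityMeasure μ]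
    (A : Fin n → Set Ω) (hA : ∀ i, MeasurableSet (A i))
    (Γ : Fin n → Finset (Fin n)) (hΓ : ∀ i, i ∉ Γ i)
    (hindep : ∀ i : Fin n, ∀ S : Finset (Fin n),
      (∀ j ∈ S, j ≠ i ∧ j ∉ Γ i) → ∀ f : Fin n → Bool,
        μ (A i ∩ ⋂ j ∈ S, (if f j then A j else (A j)ᶜ)) =
          μ (A i) * μ (⋂ j ∈ S, (if f j then A j else (A j)ᶜ)))
    (x : Fin n → ℝ) (hx : ∀ i, x i ∈ Set.Ioo (0 : ℝ) 1)
    (hbound : ∀ i, (μ (A i)).toReal ≤ x i * ∏ j ∈ Γ i, (1 - x j)) :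
    ENNReal.ofReal (∏ i, (1 - x i)) ≤ μ (⋂ i, (A i)ᶜ) ∧
      0 < μ (⋂ i, (A i)ᶜ) := by
  have hclaim := claim μ A hA Γ hindep x hx hbound n
  have hpeel := peel μ A hA x hx n hclaim Finset.univ ∅
    (by simp [Finset.card_univ])
  rw [Finset.union_empty, pC_empty, mul_one] at hpeel
  have hset : ⋂ i, (A i)ᶜ = ⋂ j ∈ Finset.univ, (A j)ᶜ := by simp
  have hprodpos : 0 < ∏ i, (1 - x i) :=
    Finset.prod_pos fun i _ => by linarith [(hx i).2]
  constructor
  · rw [hset]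
    exact ENNReal.ofReal_le_of_le_toReal hpeel
  · rw [hset]
    have htr : 0 < (μ (⋂ j ∈ Finset.univ, (A j)ᶜ)).toReal :=
      lt_of_lt_of_le hprodpos hpeel
    exact ENNReal.toReal_pos_iff.mp htr |>.1
end
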